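/- arXiv:1109.2478 — 2 statements merged into one kernel-verified Lean document; each statement's English description precedes it below -/
import Mathlib

section
/- In the ring of formal power series ℤ⟦q⟧, the following identity holds: f(q⁵,q³)² − q·f(q,q⁷)² = φ(q)·φ(q²). -/
/-- `fJacobi a b` is the theta-type series `f(q^a, q^b) = ∑_{j ∈ ℤ} q^{a·j(j−1)/2 + b·j(j+1)/2}`
in `ℤ⟦q⟧`. For each exponent `N`, all integers `j` contributing to the coefficient of `q^N`
lie in `[-(N+1), N+1]` (assuming `a`, `b` not both zero), so the coefficient is a finite count. -/
noncomputable def fJacobi (a b : ℕ) : PowerSeries ℤ :=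
  PowerSeries.mk fun N =>
    ∑ j ∈ Finset.Icc (-(N : ℤ) - 1) ((N : ℤ) + 1),
      if (a : ℤ) * (j * (j - 1) / 2) + (b : ℤ) * (j * (j + 1) / 2) = (N : ℤ) then 1 else 0

/-- `gJacobi a b` is the signed theta series
`g(q^a, q^b) = ∑_{j ∈ ℤ} (−1)^j q^{a·j(j−1)/2 + b·j(j+1)/2}` in `ℤ⟦q⟧`. -/
noncomputable def gJacobi (a b : ℕ) : PowerSeries ℤ :=
  PowerSeries.mk fun N =>
    ∑ j ∈ Finset.Icc (-(N : ℤ) - 1) ((N : ℤ) + 1),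
      if (a : ℤ) * (j * (j - 1) / 2) + (b : ℤ) * (j * (j + 1) / 2) = (N : ℤ)
      then (-1 : ℤ) ^ j.natAbs else 0

/-- `eulerPhi = φ(q) = ∏_{j=1}^∞ (1 − q^j)` in `ℤ⟦q⟧`: the coefficient of `q^N` is the
(stable) coefficient of `q^N` in the partial product `∏_{j=1}^{N+1} (1 − q^j)`. -/
noncomputable def eulerPhi : PowerSeries ℤ :=
  PowerSeries.mk fun N =>
    PowerSeries.coeff N
      (∏ j ∈ Finset.range (N + 1), (1 - (PowerSeries.X : PowerSeries ℤ) ^ (j + 1)))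

/-- `φ(q²) = ∏_{j=1}^∞ (1 − q^{2j})` in `ℤ⟦q⟧`. -/
noncomputable def eulerPhi2 : PowerSeries ℤ :=
  PowerSeries.mk fun N =>
    PowerSeries.coeff N
      (∏ j ∈ Finset.range (N + 1), (1 - (PowerSeries.X : PowerSeries ℤ) ^ (2 * (j + 1))))

/-- `S1 = ∑_{i=0}^∞ q^{2i²} / ∏_{k=1}^{2i}(1−q^k)` in `ℤ⟦q⟧`: the coefficient of `q^N` is the
(stable) coefficient of `q^N` in the partial sum over `i ≤ N` (terms with `i > N` have lowest
degree `2i² > N`). Each denominator has constant term `1`, hence is inverted via `invOfUnit`. -/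
noncomputable def S1 : PowerSeries ℤ :=
  PowerSeries.mk fun N =>
    PowerSeries.coeff N (∑ i ∈ Finset.range (N + 1),
      (PowerSeries.X : PowerSeries ℤ) ^ (2 * i ^ 2) *
        PowerSeries.invOfUnit
          (∏ k ∈ Finset.range (2 * i), (1 - (PowerSeries.X : PowerSeries ℤ) ^ (k + 1))) 1)

/-- `S2 = ∑_{i=0}^∞ q^{2i²+2i} / ∏_{k=1}^{2i+1}(1−q^k)` in `ℤ⟦q⟧`. -/
noncomputable def S2 : PowerSeries ℤ :=
  PowerSeries.mk fun N =>
    PowerSeries.coeff N (∑ i ∈ Finset.range (N + 1),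
      (PowerSeries.X : PowerSeries ℤ) ^ (2 * i ^ 2 + 2 * i) *
        PowerSeries.invOfUnit
          (∏ k ∈ Finset.range (2 * i + 1), (1 - (PowerSeries.X : PowerSeries ℤ) ^ (k + 1))) 1)

/-- `pDO m` is the number of partitions of `m` into distinct odd parts. -/
noncomputable def pDO (m : ℕ) : ℕ :=
  Nat.card {p : m.Partition // p.parts.Nodup ∧ ∀ i ∈ p.parts, Odd i}

/-- `aCount k` is the number of partitions `(λ₁^{f₁},…,λ_j^{f_j})` of `3k` (encoded as the list
`[(λ₁,f₁),…,(λ_j,f_j)]` with `λ₁ > ⋯ > λ_j > 0`) with all multiplicities `1 ≤ fᵢ ≤ 2`,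
`f₁ ≡ λ₁ (mod 3)` and `fᵢ + fᵢ₊₁ + λᵢ − λᵢ₊₁ ≡ 0 (mod 3)` for `1 ≤ i < j`. -/
noncomputable def aCount (k : ℕ) : ℕ :=
  Nat.card {L : List (ℕ × ℕ) //
    (L.map fun p => p.2 * p.1).sum = 3 * k ∧
    (∀ p ∈ L, 0 < p.1 ∧ 1 ≤ p.2 ∧ p.2 ≤ 2) ∧
    List.Chain' (fun p q => q.1 < p.1 ∧ ((p.2 : ℤ) + q.2 + p.1 - q.1) % 3 = 0) L ∧
    ∀ p ∈ L.head?, (p.2 : ℤ) % 3 = (p.1 : ℤ) % 3}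

/-- `bCount k` : same as `aCount` but for partitions of `3k − 2`. -/
noncomputable def bCount (k : ℕ) : ℕ :=
  Nat.card {L : List (ℕ × ℕ) //
    (L.map fun p => p.2 * p.1).sum = 3 * k - 2 ∧
    (∀ p ∈ L, 0 < p.1 ∧ 1 ≤ p.2 ∧ p.2 ≤ 2) ∧
    List.Chain' (fun p q => q.1 < p.1 ∧ ((p.2 : ℤ) + q.2 + p.1 - q.1) % 3 = 0) L ∧
    ∀ p ∈ L.head?, (p.2 : ℤ) % 3 = (p.1 : ℤ) % 3}

/-- Number of partitions of `n` all of whose parts have residue mod 15 outside `{r₁, r₂, r₃}`. -/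
noncomputable def pAvoid (n : ℕ) (r₁ r₂ r₃ : ℕ) : ℕ :=
  Nat.card {p : n.Partition // ∀ i ∈ p.parts, i % 15 ≠ r₁ ∧ i % 15 ≠ r₂ ∧ i % 15 ≠ r₃}



section Stmt2Aux
open PowerSeries Finset


/-- Coefficient-wise agreement up to degree `N`. -/
def EqB (N : ℕ) (A B : PowerSeries ℤ) : Prop :=
  ∀ k ≤ N, PowerSeries.coeff k A = PowerSeries.coeff k B

namespace EqB

theorem refl (N : ℕ) (A : PowerSeries ℤ) : EqB N A A := fun _ _ => rfl

theorem symm {N A B} (h : EqB N A B) : EqB N B A := fun k hk => (h k hk).symm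

theorem trans {N A B C} (h : EqB N A B) (h' : EqB N B C) : EqB N A C :=
  fun k hk => (h k hk).trans (h' k hk)

theorem add {N A B A' B'} (h : EqB N A B) (h' : EqB N A' B') : EqB N (A + A') (B + B') := by
  intro k hk; simp [map_add, h k hk, h' k hk]

theorem sub {N A B A' B'} (h : EqB N A B) (h' : EqB N A' B') : EqB N (A - A') (B - B') := by
  intro k hk; simp [map_sub, h k hk, h' k hk]

theorem mul {N A B A' B'} (h : EqB N A B) (h' : EqB N A' B') : EqB N (A * A') (B * B') := by
  intro k hk
  rw [PowerSeries.coeff_mul, PowerSeries.coeff_mul]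
  refine Finset.sum_congr rfl fun p hp => ?_
  rw [Finset.HasAntidiagonal.mem_antidiagonal] at hp
  rw [h p.1 (le_trans (by omega) hk), h' p.2 (le_trans (by omega) hk)]

theorem c_mul {N A B} (z : ℤ) (h : EqB N A B) :
    EqB N (PowerSeries.C z * A) (PowerSeries.C z * B) := by
  intro k hk; rw [PowerSeries.coeff_C_mul, PowerSeries.coeff_C_mul, h k hk]

theorem sum {N : ℕ} {ι : Type*} (s : Finset ι) (f g : ι → PowerSeries ℤ)
    (h : ∀ i ∈ s, EqB N (f i) (g i)) : EqB N (∑ i ∈ s, f i) (∑ i ∈ s, g i) := by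
  intro k hk
  rw [map_sum, map_sum]
  exact Finset.sum_congr rfl fun i hi => h i hi k hk

theorem x_pow_mul {N D e : ℕ} {A B : PowerSeries ℤ} (h : EqB D A B) (hND : N ≤ e + D) :
    EqB N (PowerSeries.X ^ e * A) (PowerSeries.X ^ e * B) := by
  intro k hk
  rw [PowerSeries.coeff_X_pow_mul', PowerSeries.coeff_X_pow_mul']
  split
  · next he => exact h (k - e) (by omega)
  · rfl

end EqB

/-- A product of factors `1 - X^(e i)` with all `e i > N` agrees with `1` below `N`. -/
theorem prod_one_sub_EqB {ι : Type*} (N : ℕ) (s : Finset ι) (e : ι → ℕ)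
    (he : ∀ i ∈ s, N < e i) :
    EqB N (∏ i ∈ s, (1 - PowerSeries.X ^ (e i))) 1 := by
  induction s using Finset.cons_induction with
  | empty => simpa using EqB.refl N 1
  | cons a s ha ih =>
    rw [Finset.prod_cons]
    have h1 : EqB N (1 - PowerSeries.X ^ (e a)) 1 := by
      intro k hk
      rw [map_sub]
      rw [PowerSeries.coeff_X_pow]
      have : ¬ (k = e a) := by have := he a (Finset.mem_cons_self a s); omega
      simp [this]
    have h2 := ih (fun i hi => he i (Finset.mem_cons_of_mem hi))
    have := EqB.mul h1 h2
    simpa using this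

/-- Gaussian binomial `[n, k]` in the variable `X^4`, extended by `0` outside `0 ≤ k ≤ n`. -/
noncomputable def qb : ℕ → ℤ → PowerSeries ℤ
  | 0, k => if k = 0 then 1 else 0
  | n+1, k => qb n (k-1) + PowerSeries.X ^ (4*k).toNat * qb n k

theorem qb_succ (n : ℕ) (k : ℤ) :
    qb (n+1) k = qb n (k-1) + PowerSeries.X ^ (4*k).toNat * qb n k := rfl

theorem qb_neg : ∀ (n : ℕ) (k : ℤ), k < 0 → qb n k = 0 := by
  intro n
  induction n with
  | zero => intro k hk; simp only [qb, if_neg (show ¬ (k = 0) by omega)]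
  | succ n ih => intro k hk; simp [qb, ih (k-1) (by omega), ih k hk]

theorem qb_gt : ∀ (n : ℕ) (k : ℤ), (n : ℤ) < k → qb n k = 0 := by
  intro n
  induction n with
  | zero =>
      intro k hk
      simp only [Nat.cast_zero] at hk
      simp only [qb, if_neg (show ¬ (k = 0) by omega)]
  | succ n ih =>
      intro k hk
      push_cast at hk
      simp [qb, ih (k-1) (by omega), ih k (by omega)]

theorem qb_zero (n : ℕ) : qb n 0 = 1 := by
  induction n with
  | zero => simp [qb]
  | succ n ih => simp [qb, ih, qb_neg n (-1) (by omega)]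

theorem qb_self : ∀ (n : ℕ), qb n n = 1 := by
  intro n
  induction n with
  | zero => simp [qb]
  | succ n ih =>
      show qb n ((n:ℤ)+1-1) + PowerSeries.X ^ (4*((n:ℤ)+1)).toNat * qb n ((n:ℤ)+1) = 1
      rw [qb_gt n ((n:ℤ)+1) (by omega)]
      simpa using ih

/-- The other Pascal rule. -/
theorem qb_ruleA : ∀ (n : ℕ) (k : ℤ),
    qb (n+1) k = PowerSeries.X ^ (4*((n:ℤ)+1-k)).toNat * qb n (k-1) + qb n k := by
  intro n
  induction n with
  | zero =>
      intro k
      show qb 0 (k-1) + PowerSeries.X ^ (4*k).toNat * qb 0 k = _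
      rcases eq_or_ne k 0 with rfl | h0
      · norm_num [qb]
      rcases eq_or_ne k 1 with rfl | h1
      · norm_num [qb]
      · simp [qb, h0, h1, show ¬ (k - 1 = 0) by omega]
  | succ n ih =>
      intro k
      show qb (n+1) (k-1) + PowerSeries.X ^ (4*k).toNat * qb (n+1) k
          = PowerSeries.X ^ (4*((n:ℤ)+1+1-k)).toNat * qb (n+1) (k-1) + qb (n+1) k
      conv_lhs => rw [ih (k-1), ih k]
      conv_rhs => rw [qb_succ n (k-1), qb_succ n k]
      -- LHS: X^A qb n (k-2') + qb n (k-1) + X^K (X^B qb n (k-1) + qb n k)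
      -- RHS: X^C (qb n (k-2') + X^{K'} qb n (k-1)) + (qb n (k-1) + X^K qb n k)
      rcases lt_or_ge k 0 with hk | hk
      · rw [qb_neg n (k-1) (by omega), qb_neg n (k-1-1) (by omega), qb_neg n k hk]
        ring
      rcases eq_or_lt_of_le hk with rfl | hk
      · rw [qb_neg n (0-1) (by omega), qb_neg n (0-1-1) (by omega)]
        ring
      rcases le_or_gt k ((n:ℤ)+1) with hk2 | hk2
      · have eA : (4*((n:ℤ)+1-(k-1))).toNat = (4*((n:ℤ)+1+1-k)).toNat := by omega
        have eKB : (4*k).toNat + (4*((n:ℤ)+1-k)).toNat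
            = (4*((n:ℤ)+1+1-k)).toNat + (4*(k-1)).toNat := by omega
        rw [eA, mul_add, mul_add, ← mul_assoc, ← mul_assoc, ← pow_add, ← pow_add, eKB]
        ring
      rcases eq_or_lt_of_le (show (n:ℤ)+1+1 ≤ k by omega) with heq | hk3
      · -- k = n+2
        rw [← heq]
        rw [qb_gt n ((n:ℤ)+1+1-1) (by omega), qb_gt n ((n:ℤ)+1+1) (by omega)]
        have h1 : (4*((n:ℤ)+1+1-((n:ℤ)+1+1))).toNat = 0 := by omega
        have h2 : (4*((n:ℤ)+1-((n:ℤ)+1+1-1))).toNat = 0 := by omega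
        rw [h1, h2]
        ring
      · rw [qb_gt n (k-1) (by omega), qb_gt n (k-1-1) (by omega), qb_gt n k (by omega)]
        ring

/-- Double Pascal rule used in the telescoping induction. -/
theorem qb_doublePascal (n : ℕ) (k : ℤ) :
    qb (n+2) k = PowerSeries.X ^ (4*((n:ℤ)+2-k)).toNat * qb n (k-2) + qb n (k-1)
      + PowerSeries.X ^ (4*(n+1)) * qb n (k-1) + PowerSeries.X ^ (4*k).toNat * qb n k := by
  show qb (n+1) (k-1) + PowerSeries.X ^ (4*k).toNat * qb (n+1) k = _
  rw [qb_ruleA n (k-1), qb_ruleA n k]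
  have e0 : k - 1 - 1 = k - 2 := by ring
  rw [e0]
  have eA : (4*((n:ℤ)+1-(k-1))).toNat = (4*((n:ℤ)+2-k)).toNat := by omega
  rw [eA]
  rcases lt_or_ge k 0 with hk | hk
  · rw [qb_neg n (k-1) (by omega), qb_neg n (k-2) (by omega), qb_neg n k hk]
    ring
  rcases eq_or_lt_of_le hk with rfl | hk
  · rw [qb_neg n (0-1) (by omega), qb_neg n (0-2) (by omega)]
    ring
  rcases le_or_gt k ((n:ℤ)+1) with hk2 | hk2
  · have eKB : (4*k).toNat + (4*((n:ℤ)+1-k)).toNat = 4*(n+1) := by omega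
    rw [mul_add, ← mul_assoc, ← pow_add, eKB]
    ring
  rcases eq_or_lt_of_le (show (n:ℤ)+2 ≤ k by omega) with heq | hk3
  · rw [← heq]
    rw [qb_gt n ((n:ℤ)+2-1) (by omega), qb_gt n ((n:ℤ)+2) (by omega)]
    ring
  · rw [qb_gt n (k-1) (by omega), qb_gt n (k-2) (by omega), qb_gt n k (by omega)]
    ring

/-- Symmetry of the Gaussian binomial. -/
theorem qb_symm : ∀ (n : ℕ) (k : ℤ), qb n ((n:ℤ) - k) = qb n k := by
  intro n
  induction n with
  | zero =>
      intro k
      rcases eq_or_ne k 0 with rfl | h0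
      · simp
      · simp only [qb, if_neg h0, Nat.cast_zero, if_neg (show ¬ ((0:ℤ) - k = 0) by omega)]
  | succ n ih =>
      intro k
      push_cast
      rw [show (n:ℤ)+1-k = ((n:ℤ)+1-k) from rfl]
      rw [show qb (n+1) ((n:ℤ)+1-k) = PowerSeries.X ^ (4*((n:ℤ)+1-((n:ℤ)+1-k))).toNat
            * qb n (((n:ℤ)+1-k)-1) + qb n ((n:ℤ)+1-k) from qb_ruleA n ((n:ℤ)+1-k)]
      rw [qb_succ n k]
      have e1 : ((n:ℤ)+1-k) - 1 = (n:ℤ) - k := by ring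
      have e2 : (4*((n:ℤ)+1-((n:ℤ)+1-k))).toNat = (4*k).toNat := by omega
      rw [e1, e2, ih k]
      have e3 : ((n:ℤ)+1-k) = (n:ℤ) - (k-1) := by ring
      rw [e3, ih (k-1)]
      ring
theorem en_nonneg' (c : ℕ) (hc : c ≤ 1) (j : ℤ) : (0:ℤ) ≤ 2*j^2 - c*j := by
  have hc' : (c:ℤ) = 0 ∨ (c:ℤ) = 1 := by omega
  rcases hc' with h | h <;> rw [h] <;> rcases le_or_gt j 0 with hj | hj
  · nlinarith [sq_nonneg j]
  · nlinarith [sq_nonneg j]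
  · nlinarith [sq_nonneg j]
  · nlinarith [mul_nonneg (by omega : (0:ℤ) ≤ j-1) (by omega : (0:ℤ) ≤ j)]

/-- `qb n k` times `∏_{i=1}^{k} (1-X^{4i})` equals `∏_{i=n-k+1}^{n} (1-X^{4i})`. -/
theorem qbE : ∀ (n : ℕ) (k : ℕ), k ≤ n →
    qb n (k:ℤ) * ∏ i ∈ Finset.range k, (1 - PowerSeries.X ^ (4*(i+1)))
      = ∏ i ∈ Finset.range k, (1 - PowerSeries.X ^ (4*(n-k+i+1))) := by
  intro n
  induction n with
  | zero =>
      intro k hk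
      interval_cases k
      simp [qb]
  | succ n ih =>
      intro k hk
      match k with
      | 0 => simp [qb_zero]
      | (k'+1) =>
        rw [qb_succ n ((k'+1 : ℕ):ℤ)]
        have e1 : ((k'+1 : ℕ):ℤ) - 1 = (k' : ℤ) := by push_cast; ring
        have e2 : (4*((k'+1 : ℕ):ℤ)).toNat = 4*(k'+1) := by omega
        rw [e1, e2]
        rw [Finset.prod_range_succ, add_mul]
        have T1 : qb n (k':ℤ) * ((∏ i ∈ Finset.range k', (1 - PowerSeries.X ^ (4*(i+1))))
              * (1 - PowerSeries.X ^ (4*(k'+1))))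
            = (∏ i ∈ Finset.range k', (1 - PowerSeries.X ^ (4*(n-k'+i+1))))
              * (1 - PowerSeries.X ^ (4*(k'+1))) := by
          rw [← mul_assoc, ih k' (by omega)]
        rcases eq_or_lt_of_le hk with heq | hlt
        · -- k'+1 = n+1, so k' = n
          have hk'n : k' = n := by omega
          subst hk'n
          rw [qb_gt k' ((k'+1:ℕ):ℤ) (by push_cast; omega)]
          rw [T1]
          simp only [mul_zero, zero_mul, add_zero]
          have L1 : (∏ i ∈ Finset.range k', ((1:PowerSeries ℤ) - PowerSeries.X ^ (4*(k'-k'+i+1))))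
              = ∏ i ∈ Finset.range k', ((1:PowerSeries ℤ) - PowerSeries.X ^ (4*(i+1))) :=
            Finset.prod_congr rfl (fun i _ => by
              have h : 4*(k'-k'+i+1) = 4*(i+1) := by omega
              rw [h])
          have R1 : (∏ i ∈ Finset.range (k'+1),
                ((1:PowerSeries ℤ) - PowerSeries.X ^ (4*(k'+1-(k'+1)+i+1))))
              = ∏ i ∈ Finset.range (k'+1), ((1:PowerSeries ℤ) - PowerSeries.X ^ (4*(i+1))) :=
            Finset.prod_congr rfl (fun i _ => by
              have h : 4*(k'+1-(k'+1)+i+1) = 4*(i+1) := by omega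
              rw [h])
          rw [L1, R1, Finset.prod_range_succ]
        · -- k'+1 ≤ n
          have hk'1n : k' + 1 ≤ n := by omega
          rw [T1]
          have T2 : qb n ((k'+1:ℕ):ℤ) * ∏ i ∈ Finset.range (k'+1), (1 - PowerSeries.X ^ (4*(i+1)))
              = ∏ i ∈ Finset.range (k'+1), (1 - PowerSeries.X ^ (4*(n-(k'+1)+i+1))) := ih (k'+1) hk'1n
          rw [Finset.prod_range_succ] at T2
          -- reorganize: X^{4(k'+1)} * (qb n (k'+1) * E_{k'} * (1-X^{4(k'+1)}))
          have T2' : PowerSeries.X ^ (4*(k'+1)) * (qb n ((k'+1:ℕ):ℤ)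
                * ((∏ i ∈ Finset.range k', (1 - PowerSeries.X ^ (4*(i+1))))
                  * (1 - PowerSeries.X ^ (4*(k'+1)))))
              = PowerSeries.X ^ (4*(k'+1)) *
                  ∏ i ∈ Finset.range (k'+1), (1 - PowerSeries.X ^ (4*(n-(k'+1)+i+1))) := by
            rw [← T2]
          rw [show PowerSeries.X ^ (4*(k'+1)) * qb n ((k'+1:ℕ):ℤ)
                * ((∏ i ∈ Finset.range k', (1 - PowerSeries.X ^ (4*(i+1))))
                  * (1 - PowerSeries.X ^ (4*(k'+1))))
              = PowerSeries.X ^ (4*(k'+1)) * (qb n ((k'+1:ℕ):ℤ)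
                * ((∏ i ∈ Finset.range k', (1 - PowerSeries.X ^ (4*(i+1))))
                  * (1 - PowerSeries.X ^ (4*(k'+1))))) from by ring, T2']
          -- peel first factor of the (k'+1)-product
          rw [Finset.prod_range_succ']
          -- now: E' * (1-X^{4(n-k')}) pattern
          have ef : ∀ i ∈ Finset.range k', ((1:PowerSeries ℤ) - PowerSeries.X ^ (4*(n-(k'+1)+(i+1)+1)))
              = (1 - PowerSeries.X ^ (4*(n-k'+i+1))) := by
            intro i _
            have h : 4*(n-(k'+1)+(i+1)+1) = 4*(n-k'+i+1) := by omega
            rw [h]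
          rw [Finset.prod_congr rfl ef]
          have e0 : 4*(n-(k'+1)+0+1) = 4*(n-k') := by omega
          rw [e0]
          -- target side
          have etgt : ∀ i ∈ Finset.range (k'+1), ((1:PowerSeries ℤ) - PowerSeries.X ^ (4*(n+1-(k'+1)+i+1)))
              = (1 - PowerSeries.X ^ (4*(n-k'+i+1))) := by
            intro i _
            have h : 4*(n+1-(k'+1)+i+1) = 4*(n-k'+i+1) := by omega
            rw [h]
          rw [Finset.prod_congr rfl etgt, Finset.prod_range_succ]
          have elast : 4*(n-k'+k'+1) = 4*(n+1) := by omega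
          rw [elast]
          rw [show 4*(n+1) = 4*(n-k') + 4*(k'+1) from by omega, pow_add]
          ring

/-- Stabilization: `qb n k` times a long enough even product is `1` below degree `N`. -/
theorem qb_stab (N n L k : ℕ) (hkn : k ≤ n) (hkL : k ≤ L)
    (h1 : N < 4*(n-k)+4) (h2 : N < 4*k+4) :
    EqB N (qb n (k:ℤ) * ∏ i ∈ Finset.range L, (1 - PowerSeries.X ^ (4*(i+1)))) 1 := by
  have hL : L = k + (L - k) := by omega
  rw [hL, Finset.prod_range_add, ← mul_assoc, qbE n k hkn]
  have g1 : EqB N (∏ i ∈ Finset.range k, (1 - PowerSeries.X ^ (4*(n-k+i+1)))) 1 :=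
    prod_one_sub_EqB N _ _ (fun i _ => by omega)
  have g2 : EqB N (∏ i ∈ Finset.range (L-k), (1 - PowerSeries.X ^ (4*(k+i+1)))) 1 :=
    prod_one_sub_EqB N _ _ (fun i _ => by omega)
  have := EqB.mul g1 g2
  simpa using this

/-- Natural-number exponent of the theta series. -/
def en (c : ℕ) (j : ℤ) : ℕ := (2*j^2 - c*j).toNat

theorem en_shift_down (c M : ℕ) (hc : c ≤ 1) (j : ℤ) (hj : j ≤ (M:ℤ)+1) :
    en c j + (4*((M:ℤ)+1-j)).toNat = (4*M+2-c) + en c (j-1) := by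
  have h1 := en_nonneg' c hc j
  have h2 := en_nonneg' c hc (j-1)
  have h3 : 2*j^2 - (c:ℤ)*j + 4*((M:ℤ)+1-j)
      = ((4*M+2-c : ℕ) : ℤ) + (2*(j-1)^2 - c*(j-1)) := by
    have hcast : ((4*M+2-c : ℕ) : ℤ) = 4*(M:ℤ)+2-c := by omega
    rw [hcast]; ring
  unfold en
  generalize hA : 2*j^2 - (c:ℤ)*j = A at *
  generalize hB : 2*(j-1)^2 - (c:ℤ)*(j-1) = B at *
  omega

theorem en_shift_up (c M : ℕ) (hc : c ≤ 1) (j : ℤ) (hj : -(M:ℤ)-1 ≤ j) :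
    en c j + (4*((M:ℤ)+1+j)).toNat = (4*M+2+c) + en c (j+1) := by
  have h1 := en_nonneg' c hc j
  have h2 := en_nonneg' c hc (j+1)
  have h3 : 2*j^2 - (c:ℤ)*j + 4*((M:ℤ)+1+j)
      = ((4*M+2+c : ℕ) : ℤ) + (2*(j+1)^2 - c*(j+1)) := by
    push_cast; ring
  unfold en
  generalize hA : 2*j^2 - (c:ℤ)*j = A at *
  generalize hB : 2*(j+1)^2 - (c:ℤ)*(j+1) = B at *
  omega

/-- The summand in the finite Jacobi triple product. -/
noncomputable def jterm (c M : ℕ) (j : ℤ) : PowerSeries ℤ :=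
  PowerSeries.C (j.negOnePow : ℤ) *
    (PowerSeries.X ^ en c j * qb (2*M) ((M:ℤ) + j))

theorem jterm_zero_lo (c M : ℕ) (j : ℤ) (h : j < -(M:ℤ)) : jterm c M j = 0 := by
  unfold jterm
  rw [qb_neg (2*M) ((M:ℤ)+j) (by omega)]
  ring

theorem jterm_zero_hi (c M : ℕ) (j : ℤ) (h : (M:ℤ) < j) : jterm c M j = 0 := by
  unfold jterm
  rw [qb_gt (2*M) ((M:ℤ)+j) (by push_cast; omega)]
  ring

theorem neg_negOnePow_pred (j : ℤ) : ((j.negOnePow : ℤ)) = -(((j-1).negOnePow : ℤ)) := by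
  have := Int.negOnePow_succ (j-1)
  rw [sub_add_cancel] at this
  rw [this]
  push_cast
  ring

theorem neg_negOnePow_succ (j : ℤ) : ((j.negOnePow : ℤ)) = -(((j+1).negOnePow : ℤ)) := by
  rw [Int.negOnePow_succ j]
  push_cast
  ring


theorem en_shift_up' (c M : ℕ) (hc : c ≤ 1) (j : ℤ) :
    en c j + (4*((M:ℤ)+(j+1))).toNat = (4*M+2+c) + en c (j+1) ∨ qb (2*M) ((M:ℤ)+(j+1)) = 0 := by
  rcases lt_or_ge ((M:ℤ)+(j+1)) 0 with h | h
  · exact Or.inr (qb_neg _ _ h)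
  · left
    have h1 := en_nonneg' c hc j
    have h2 := en_nonneg' c hc (j+1)
    have h3 : 2*j^2 - (c:ℤ)*j + 4*((M:ℤ)+(j+1))
        = ((4*M+2+c : ℕ) : ℤ) + (2*(j+1)^2 - c*(j+1)) := by
      push_cast; ring
    unfold en
    generalize hA : 2*j^2 - (c:ℤ)*j = A at *
    generalize hB : 2*(j+1)^2 - (c:ℤ)*(j+1) = B at *
    omega

theorem jterm_rec (c M : ℕ) (hc : c ≤ 1) (j : ℤ) (hj2 : j ≤ (M:ℤ)+1) :
    jterm c (M+1) j = jterm c M j + PowerSeries.X ^ (8*M+4) * jterm c M j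
      - PowerSeries.X ^ (4*M+2-c) * jterm c M (j-1)
      - PowerSeries.X ^ (4*M+2+c) * jterm c M (j+1) := by
  unfold jterm
  have harg : ((M+1 : ℕ):ℤ) + j = ((M:ℤ)+1+j) := by push_cast; ring
  have h2M : 2*(M+1) = 2*M + 2 := by ring
  rw [harg, h2M, qb_doublePascal (2*M) ((M:ℤ)+1+j)]
  have ekA : (4*(((2*M:ℕ) :ℤ)+2-((M:ℤ)+1+j))).toNat = (4*((M:ℤ)+1-j)).toNat := by
    push_cast; omega
  rw [ekA]
  have ek2 : (M:ℤ)+1+j-2 = (M:ℤ) + (j-1) := by ring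
  have ek1 : (M:ℤ)+1+j-1 = (M:ℤ) + j := by ring
  have ek3 : (M:ℤ)+1+j = (M:ℤ) + (j+1) := by ring
  rw [ek2, ek1, ek3]
  have e8 : 4*(2*M+1) = 8*M+4 := by ring
  rw [e8]
  rw [show (((j-1).negOnePow : ℤ)) = -((j.negOnePow : ℤ)) from by
        rw [neg_negOnePow_pred j]; ring]
  rw [show (((j+1).negOnePow : ℤ)) = -((j.negOnePow : ℤ)) from by
        rw [neg_negOnePow_succ j]; ring]
  rw [map_neg]
  have key1 : PowerSeries.X ^ en c j * (PowerSeries.X ^ ((4*((M:ℤ)+1-j)).toNat)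
        * qb (2*M) ((M:ℤ)+(j-1)))
      = PowerSeries.X ^ (4*M+2-c) * (PowerSeries.X ^ (en c (j-1)) * qb (2*M) ((M:ℤ)+(j-1))) := by
    rw [← mul_assoc, ← pow_add, en_shift_down c M hc j hj2, pow_add, mul_assoc]
  have key4 : PowerSeries.X ^ en c j * (PowerSeries.X ^ ((4*((M:ℤ)+(j+1))).toNat)
        * qb (2*M) ((M:ℤ)+(j+1)))
      = PowerSeries.X ^ (4*M+2+c) * (PowerSeries.X ^ (en c (j+1)) * qb (2*M) ((M:ℤ)+(j+1))) := by
    rcases en_shift_up' c M hc j with h | h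
    · rw [← mul_assoc, ← pow_add, h, pow_add, mul_assoc]
    · rw [h]; ring
  calc PowerSeries.C (j.negOnePow : ℤ) *
        (PowerSeries.X ^ en c j *
          (PowerSeries.X ^ ((4*((M:ℤ)+1-j)).toNat) * qb (2*M) ((M:ℤ)+(j-1))
            + qb (2*M) ((M:ℤ)+j)
            + PowerSeries.X ^ (8*M+4) * qb (2*M) ((M:ℤ)+j)
            + PowerSeries.X ^ ((4*((M:ℤ)+(j+1))).toNat) * qb (2*M) ((M:ℤ)+(j+1))))
      = PowerSeries.C (j.negOnePow : ℤ) *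
          (PowerSeries.X ^ en c j * (PowerSeries.X ^ ((4*((M:ℤ)+1-j)).toNat) * qb (2*M) ((M:ℤ)+(j-1)))
          + PowerSeries.X ^ en c j * qb (2*M) ((M:ℤ)+j)
          + PowerSeries.X ^ en c j * (PowerSeries.X ^ (8*M+4) * qb (2*M) ((M:ℤ)+j))
          + PowerSeries.X ^ en c j * (PowerSeries.X ^ ((4*((M:ℤ)+(j+1))).toNat) * qb (2*M) ((M:ℤ)+(j+1)))) := by
        ring
    _ = _ := by
        rw [key1, key4]
        ring

theorem sum_jterm_ext (c M : ℕ) (a b : ℤ) (ha : a ≤ -(M:ℤ)) (hb : (M:ℤ) ≤ b) :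
    ∑ j ∈ Finset.Icc a b, jterm c M j = ∑ j ∈ Finset.Icc (-(M:ℤ)) (M:ℤ), jterm c M j := by
  symm
  apply Finset.sum_subset (Finset.Icc_subset_Icc ha hb)
  intro j hj hj2
  simp only [Finset.mem_Icc, not_and_or, not_le] at hj2
  rcases hj2 with h | h
  · exact jterm_zero_lo c M j h
  · exact jterm_zero_hi c M j h

/-- Shifted sums over `Icc`. -/
theorem sum_Icc_shift (f : ℤ → PowerSeries ℤ) (a b t : ℤ) :
    ∑ j ∈ Finset.Icc (a+t) (b+t), f j = ∑ j ∈ Finset.Icc a b, f (j+t) := by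
  rw [← Finset.map_add_right_Icc a b t, Finset.sum_map]
  rfl

/-- The finite Jacobi triple product, with `z` specialized. -/
theorem jtp (c : ℕ) (hc : c ≤ 1) : ∀ M : ℕ,
    (∏ n ∈ Finset.range M, ((1 - PowerSeries.X ^ (4*n+2-c)) * (1 - PowerSeries.X ^ (4*n+2+c))))
      = ∑ j ∈ Finset.Icc (-(M:ℤ)) (M:ℤ), jterm c M j := by
  intro M
  induction M with
  | zero =>
      simp only [Finset.range_zero, Finset.prod_empty, Nat.cast_zero, neg_zero,
        Finset.Icc_self, Finset.sum_singleton]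
      unfold jterm en
      norm_num [qb_zero]
  | succ M ih =>
      rw [Finset.prod_range_succ, ih]
      -- rewrite each new term by jterm_rec
      have hIcc : Finset.Icc (-((M+1:ℕ):ℤ)) ((M+1:ℕ):ℤ)
          = Finset.Icc (-(M:ℤ)-1) ((M:ℤ)+1) := by
        congr 1 <;> push_cast <;> ring
      rw [hIcc]
      have hcongr : ∑ j ∈ Finset.Icc (-(M:ℤ)-1) ((M:ℤ)+1), jterm c (M+1) j
          = ∑ j ∈ Finset.Icc (-(M:ℤ)-1) ((M:ℤ)+1),
              (jterm c M j + PowerSeries.X ^ (8*M+4) * jterm c M j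
                - PowerSeries.X ^ (4*M+2-c) * jterm c M (j-1)
                - PowerSeries.X ^ (4*M+2+c) * jterm c M (j+1)) :=
        Finset.sum_congr rfl (fun j hj => jterm_rec c M hc j
          (by rw [Finset.mem_Icc] at hj; omega))
      rw [hcongr]
      rw [Finset.sum_sub_distrib, Finset.sum_sub_distrib, Finset.sum_add_distrib,
        ← Finset.mul_sum, ← Finset.mul_sum, ← Finset.mul_sum]
      -- the four sums over the extended window
      have hS : ∑ j ∈ Finset.Icc (-(M:ℤ)-1) ((M:ℤ)+1), jterm c M j
          = ∑ j ∈ Finset.Icc (-(M:ℤ)) (M:ℤ), jterm c M j :=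
        sum_jterm_ext c M _ _ (by omega) (by omega)
      have hS1 : ∑ j ∈ Finset.Icc (-(M:ℤ)-1) ((M:ℤ)+1), jterm c M (j-1)
          = ∑ j ∈ Finset.Icc (-(M:ℤ)) (M:ℤ), jterm c M j := by
        have : Finset.Icc (-(M:ℤ)-1) ((M:ℤ)+1)
            = Finset.Icc ((-(M:ℤ)) + (-1)) (((M:ℤ)+2) + (-1)) := by congr 1 <;> ring
        rw [this, sum_Icc_shift (fun j => jterm c M (j-1)) (-(M:ℤ)) ((M:ℤ)+2) (-1)]
        have : ∀ j ∈ Finset.Icc (-(M:ℤ)) ((M:ℤ)+2), jterm c M (j + -1 - 1) = jterm c M (j-2) := by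
          intro j _; congr 1; ring
        rw [Finset.sum_congr rfl this]
        -- now shift again: ∑_{Icc(-M, M+2)} f (j-2) = ∑_{Icc(-M-2, M)} f j; drop extras
        have h2 : Finset.Icc (-(M:ℤ)) ((M:ℤ)+2)
            = Finset.Icc ((-(M:ℤ)-2) + 2) (((M:ℤ)) + 2) := by congr 1 <;> ring
        rw [h2, sum_Icc_shift (fun j => jterm c M (j-2)) (-(M:ℤ)-2) ((M:ℤ)) 2]
        have : ∀ j ∈ Finset.Icc (-(M:ℤ)-2) ((M:ℤ)), jterm c M (j + 2 - 2) = jterm c M j := by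
          intro j _; congr 1; ring
        rw [Finset.sum_congr rfl this]
        exact sum_jterm_ext c M _ _ (by omega) (by omega)
      have hS2 : ∑ j ∈ Finset.Icc (-(M:ℤ)-1) ((M:ℤ)+1), jterm c M (j+1)
          = ∑ j ∈ Finset.Icc (-(M:ℤ)) (M:ℤ), jterm c M j := by
        have : Finset.Icc (-(M:ℤ)-1) ((M:ℤ)+1)
            = Finset.Icc ((-(M:ℤ)-2) + 1) (((M:ℤ)) + 1) := by congr 1 <;> ring
        rw [this, sum_Icc_shift (fun j => jterm c M (j+1)) (-(M:ℤ)-2) ((M:ℤ)) 1]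
        have : ∀ j ∈ Finset.Icc (-(M:ℤ)-2) ((M:ℤ)), jterm c M (j + 1 + 1) = jterm c M (j+2) := by
          intro j _; congr 1; ring
        rw [Finset.sum_congr rfl this]
        have h2 : Finset.Icc (-(M:ℤ)-2) ((M:ℤ))
            = Finset.Icc ((-(M:ℤ)) + (-2)) (((M:ℤ)+2) + (-2)) := by congr 1 <;> ring
        rw [h2, sum_Icc_shift (fun j => jterm c M (j+2)) (-(M:ℤ)) ((M:ℤ)+2) (-2)]
        have : ∀ j ∈ Finset.Icc (-(M:ℤ)) ((M:ℤ)+2), jterm c M (j + -2 + 2) = jterm c M j := by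
          intro j _; congr 1; ring
        rw [Finset.sum_congr rfl this]
        exact sum_jterm_ext c M _ _ (by omega) (by omega)
      rw [hS, hS1, hS2]
      have hAB : (4*M+2-c) + (4*M+2+c) = 8*M+4 := by omega
      have hX : (PowerSeries.X : PowerSeries ℤ) ^ (8*M+4)
          = PowerSeries.X ^ (4*M+2-c) * PowerSeries.X ^ (4*M+2+c) := by
        rw [← pow_add, hAB]
      rw [hX]
      ring
/-- Even-exponent Euler product truncation. -/
noncomputable def Phi4 (L : ℕ) : PowerSeries ℤ :=
  ∏ i ∈ Finset.range L, (1 - PowerSeries.X ^ (4*(i+1)))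

/-- The JTP product. -/
noncomputable def Pc (c M : ℕ) : PowerSeries ℤ :=
  ∏ n ∈ Finset.range M, ((1 - PowerSeries.X ^ (4*n+2-c)) * (1 - PowerSeries.X ^ (4*n+2+c)))

/-- The (signed) theta polynomial. -/
noncomputable def Tc (c M : ℕ) : PowerSeries ℤ :=
  ∑ j ∈ Finset.Icc (-(M:ℤ)) (M:ℤ), PowerSeries.C (j.negOnePow : ℤ) * PowerSeries.X ^ en c j

theorem theta_eq (c : ℕ) (hc : c ≤ 1) (N M : ℕ) (hM : N ≤ M) :
    EqB N (Tc c M) (Phi4 M * Pc c M) := by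
  unfold Tc Pc
  rw [jtp c hc M, Finset.mul_sum]
  apply EqB.sum
  intro j hj
  rw [Finset.mem_Icc] at hj
  have hjM : j.natAbs ≤ M := by omega
  -- replace the qb argument by `M - |j|` using symmetry
  have hq : qb (2*M) ((M:ℤ) + j) = qb (2*M) (((M - j.natAbs : ℕ) : ℤ)) := by
    rcases le_or_gt 0 j with hj0 | hj0
    · rw [show (M:ℤ) + j = ((2*M:ℕ):ℤ) - (((M - j.natAbs : ℕ)):ℤ) from by omega]
      exact qb_symm (2*M) _
    · rw [show (M:ℤ) + j = (((M - j.natAbs : ℕ)):ℤ) from by omega]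
  unfold jterm
  rw [hq]
  set k : ℕ := M - j.natAbs with hk
  have hstab : EqB (4*k+3) (qb (2*M) ((k:ℕ):ℤ) * Phi4 M) 1 := by
    unfold Phi4
    exact qb_stab (4*k+3) (2*M) M k (by omega) (by omega) (by omega) (by omega)
  have hre : Phi4 M * (PowerSeries.C (j.negOnePow : ℤ) *
        (PowerSeries.X ^ en c j * qb (2*M) ((k:ℕ):ℤ)))
      = PowerSeries.C (j.negOnePow : ℤ) *
        (PowerSeries.X ^ en c j * (qb (2*M) ((k:ℕ):ℤ) * Phi4 M)) := by ring
  rw [hre]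
  apply EqB.c_mul
  -- exponent bound
  have hND : N ≤ en c j + (4*k+3) := by
    have hen : ((en c j : ℕ) : ℤ) = 2*j^2 - (c:ℤ)*j := Int.toNat_of_nonneg (en_nonneg' c hc j)
    have hsq : ((j.natAbs:ℤ))*((j.natAbs:ℤ)) = j*j := Int.natAbs_mul_self' j
    have hcj : (c:ℤ)*j ≤ (j.natAbs:ℤ) := by
      have h1 : j ≤ (j.natAbs:ℤ) := Int.le_natAbs
      have h2 : (0:ℤ) ≤ (j.natAbs:ℤ) := by positivity
      have hc' : (c:ℤ) = 0 ∨ (c:ℤ) = 1 := by omega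
      rcases hc' with h | h <;> rw [h] <;> nlinarith
    have hkey : (0:ℤ) ≤ 2*((j.natAbs:ℤ))^2 - 5*(j.natAbs:ℤ) + 3 := by
      rcases le_or_gt ((j.natAbs:ℤ)) 1 with h | h
      · nlinarith [mul_nonneg (by omega : (0:ℤ) ≤ 1 - (j.natAbs:ℤ))
          (by positivity : (0:ℤ) ≤ (3:ℤ) - 2*0)]
      · nlinarith [mul_nonneg (by omega : (0:ℤ) ≤ (j.natAbs:ℤ) - 1)
          (by omega : (0:ℤ) ≤ 2*(j.natAbs:ℤ) - 3)]
    have hkc : ((k:ℕ):ℤ) = (M:ℤ) - (j.natAbs:ℤ) := by omega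
    have hj2 : ((j.natAbs:ℤ))^2 = j^2 := by nlinarith [hsq]
    have : (N:ℤ) ≤ ((en c j : ℕ):ℤ) + (4*((k:ℕ):ℤ)+3) := by
      rw [hen, hkc]
      have hNM : (N:ℤ) ≤ (M:ℤ) := by exact_mod_cast hM
      nlinarith [hkey, hcj, hj2]
    omega
  have h2 := EqB.x_pow_mul (N := N) (e := en c j) hstab hND
  rw [mul_one] at h2
  exact h2.symm
theorem prod_split4 (f : ℕ → PowerSeries ℤ) : ∀ M : ℕ,
    ∏ n ∈ Finset.range (4*M), f n
      = ∏ n ∈ Finset.range M, (f (4*n) * f (4*n+1) * f (4*n+2) * f (4*n+3)) := by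
  intro M
  induction M with
  | zero => simp
  | succ M ih =>
      rw [show 4*(M+1) = 4*M + 4 from by ring, Finset.prod_range_add, ih,
        Finset.prod_range_succ]
      congr 1
      simp [Finset.prod_range_succ]

theorem prod_split2 (f : ℕ → PowerSeries ℤ) : ∀ M : ℕ,
    ∏ n ∈ Finset.range (2*M), f n
      = ∏ n ∈ Finset.range M, (f (2*n) * f (2*n+1)) := by
  intro M
  induction M with
  | zero => simp
  | succ M ih =>
      rw [show 2*(M+1) = 2*M + 2 from by ring, Finset.prod_range_add, ih,
        Finset.prod_range_succ]
      congr 1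
      simp [Finset.prod_range_succ]

/-- The combination of the two JTP products with the `X^4`-Euler factors equals the
truncated `φ(q)·φ(q²)`. -/
theorem prod_combine (M : ℕ) :
    (Phi4 M * Pc 1 M) * (Phi4 M * Pc 0 M)
      = (∏ n ∈ Finset.range (4*M), (1 - PowerSeries.X ^ (n+1)))
        * (∏ n ∈ Finset.range (2*M), (1 - PowerSeries.X ^ (2*(n+1)))) := by
  rw [prod_split4 (fun n => 1 - PowerSeries.X ^ (n+1)) M,
    prod_split2 (fun n => 1 - PowerSeries.X ^ (2*(n+1))) M]
  unfold Phi4 Pc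
  rw [← Finset.prod_mul_distrib, ← Finset.prod_mul_distrib, ← Finset.prod_mul_distrib,
    ← Finset.prod_mul_distrib]
  apply Finset.prod_congr rfl
  intro n _
  rw [show 4*n+2-1 = 4*n+1 from by omega, show 4*n+2+1 = 4*n+3 from by omega,
    show 4*n+2-0 = 4*n+2 from by omega, show 4*n+2+0 = 4*n+2 from by omega,
    show 4*n+1+1 = 4*n+2 from by omega, show 4*n+2+1 = 4*n+3 from by omega,
    show 4*n+3+1 = 4*n+4 from by omega, show 4*(n+1) = 4*n+4 from by omega,
    show 2*(2*n+1) = 4*n+2 from by omega, show 2*(2*n+1+1) = 4*n+4 from by omega,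
    show 4*n+0+1 = 4*n+1 from by omega]
  ring

/-- Truncation stability for products of `1 - X^(e n)` with `e n > n`. -/
theorem prod_trunc (e : ℕ → ℕ) (he : ∀ n, n < e n) (k L L' : ℕ) (hk : k < L) (hL : L ≤ L') :
    EqB k (∏ n ∈ Finset.range L', (1 - PowerSeries.X ^ (e n)))
      (∏ n ∈ Finset.range L, (1 - PowerSeries.X ^ (e n))) := by
  rw [show L' = L + (L'-L) from by omega, Finset.prod_range_add]
  have h2 : EqB k (∏ i ∈ Finset.range (L'-L), (1 - PowerSeries.X ^ (e (L+i)))) 1 :=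
    prod_one_sub_EqB k _ _ (fun i _ => by have := he (L+i); omega)
  have h3 := EqB.mul (EqB.refl k (∏ n ∈ Finset.range L, (1 - PowerSeries.X ^ (e n)))) h2
  simpa using h3

theorem eulerPhi_eqb (N M : ℕ) (hM : N < 4*M) :
    EqB N eulerPhi (∏ n ∈ Finset.range (4*M), (1 - PowerSeries.X ^ (n+1))) := by
  intro k hk
  have h1 : PowerSeries.coeff k eulerPhi
      = PowerSeries.coeff k (∏ n ∈ Finset.range (k+1), (1 - PowerSeries.X ^ (n+1))) := by
    unfold eulerPhi
    rw [PowerSeries.coeff_mk]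
  rw [h1]
  exact (prod_trunc (fun n => n+1) (fun n => show n < n+1 by omega) k (k+1) (4*M)
    (by omega) (by omega) k le_rfl).symm

theorem eulerPhi2_eqb (N M : ℕ) (hM : N < 2*M) :
    EqB N eulerPhi2 (∏ n ∈ Finset.range (2*M), (1 - PowerSeries.X ^ (2*(n+1)))) := by
  intro k hk
  have h1 : PowerSeries.coeff k eulerPhi2
      = PowerSeries.coeff k (∏ n ∈ Finset.range (k+1), (1 - PowerSeries.X ^ (2*(n+1)))) := by
    unfold eulerPhi2
    rw [PowerSeries.coeff_mk]
  rw [h1]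
  exact (prod_trunc (fun n => 2*(n+1)) (fun n => show n < 2*(n+1) by omega) k (k+1) (2*M)
    (by omega) (by omega) k le_rfl).symm
theorem abs_le_quad (A B j : ℤ) (hA : 2 ≤ A) (hB : |B| ≤ A - 1) :
    (j.natAbs : ℤ) ≤ A*j^2 + B*j := by
  rcases eq_or_ne j 0 with rfl | hj
  · simp
  · have h1 : (1:ℤ) ≤ (j.natAbs:ℤ) := by
      have := Int.natAbs_pos.mpr hj; omega
    have habs : |j| = (j.natAbs:ℤ) := Int.abs_eq_natAbs j
    have hsq : A*j^2 = A*((j.natAbs:ℤ))^2 := by rw [← sq_abs j, habs]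
    have h2 : |B| * |j| ≤ (A-1) * |j| := mul_le_mul_of_nonneg_right hB (abs_nonneg j)
    have h3 : -(|B| * |j|) ≤ B*j := by
      have := neg_abs_le (B*j)
      rw [abs_mul] at this
      linarith
    have h4 : (0:ℤ) ≤ A*((j.natAbs:ℤ)*((j.natAbs:ℤ)-1)) :=
      mul_nonneg (by omega) (mul_nonneg (by omega) (by omega))
    have h5 : A*((j.natAbs:ℤ)*((j.natAbs:ℤ)-1)) = A*((j.natAbs:ℤ))^2 - A*(j.natAbs:ℤ) := by ring
    have h6 : (A-1) * |j| = A*(j.natAbs:ℤ) - (j.natAbs:ℤ) := by rw [habs]; ring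
    linarith

theorem quad_nonneg (A B j : ℤ) (hA : 2 ≤ A) (hB : |B| ≤ A - 1) : 0 ≤ A*j^2 + B*j :=
  le_trans (by positivity) (abs_le_quad A B j hA hB)

theorem exp_half (a b : ℕ) (A B j : ℤ) (h2A : (a:ℤ) + b = 2*A) (h2B : (b:ℤ) - a = 2*B) :
    (a:ℤ)*(j*(j-1)/2) + (b:ℤ)*(j*(j+1)/2) = A*j^2 + B*j := by
  obtain ⟨u, hu⟩ := Int.even_mul_succ_self (j-1)
  obtain ⟨v, hv⟩ := Int.even_mul_succ_self j
  have hm : j*(j-1) = 2*u := by linear_combination hu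
  have hn : j*(j+1) = 2*v := by linear_combination hv
  have hdu : j*(j-1)/2 = u := by rw [hm]; exact Int.mul_ediv_cancel_left u two_ne_zero
  have hdv : j*(j+1)/2 = v := by rw [hn]; exact Int.mul_ediv_cancel_left v two_ne_zero
  rw [hdu, hdv]
  have key : (2:ℤ)*((a:ℤ)*u + (b:ℤ)*v) = 2*(A*j^2 + B*j) := by
    linear_combination (-(a:ℤ))*hm + (-(b:ℤ))*hn + j^2*h2A + j*h2B
  exact mul_left_cancel₀ two_ne_zero key

/-- Unsigned theta polynomial with exponent `A j² + B j`. -/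
noncomputable def ThU (A B : ℤ) (M : ℕ) : PowerSeries ℤ :=
  ∑ j ∈ Finset.Icc (-(M:ℤ)) (M:ℤ), PowerSeries.X ^ ((A*j^2 + B*j).toNat)

theorem fJ_eqb (a b : ℕ) (A B : ℤ) (hA : 2 ≤ A) (hB : |B| ≤ A - 1)
    (h2A : (a:ℤ) + b = 2*A) (h2B : (b:ℤ) - a = 2*B) (N M : ℕ) (hM : N < M) :
    EqB N (fJacobi a b) (ThU A B M) := by
  intro k hk
  unfold fJacobi ThU
  rw [PowerSeries.coeff_mk, map_sum]
  have hR : ∀ j:ℤ, PowerSeries.coeff k ((PowerSeries.X : PowerSeries ℤ) ^ ((A*j^2+B*j).toNat))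
      = if A*j^2+B*j = (k:ℤ) then 1 else 0 := by
    intro j
    rw [PowerSeries.coeff_X_pow]
    have h0 : 0 ≤ A*j^2+B*j := quad_nonneg A B j hA hB
    exact if_congr (by omega) rfl rfl
  rw [Finset.sum_congr rfl (fun j _ => hR j)]
  rw [Finset.sum_congr rfl (fun j _ => by rw [exp_half a b A B j h2A h2B])]
  have hz : ∀ j : ℤ, ¬ (j.natAbs ≤ (k:ℕ)) →
      (if A*j^2+B*j = (k:ℤ) then (1:ℤ) else 0) = 0 := by
    intro j hj
    apply if_neg
    intro hc
    have := abs_le_quad A B j hA hB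
    omega
  rw [Finset.sum_subset (Finset.Icc_subset_Icc (show -(M:ℤ)-1 ≤ -(k:ℤ)-1 by omega)
      (show (k:ℤ)+1 ≤ (M:ℤ)+1 by omega))
      (fun j _ hj => hz j (by rw [Finset.mem_Icc] at hj; omega))]
  rw [Finset.sum_subset (Finset.Icc_subset_Icc (show -(M:ℤ)-1 ≤ -(M:ℤ) by omega)
      (show (M:ℤ) ≤ (M:ℤ)+1 by omega))
      (fun j _ hj => hz j (by rw [Finset.mem_Icc] at hj; omega))]
theorem en_one (j : ℤ) : en 1 j = (2*j^2 - j).toNat := by unfold en; norm_num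

theorem en_zero (j : ℤ) : en 0 j = (2*j^2).toNat := by unfold en; norm_num

theorem coeff_ThU_mul (A B A' B' : ℤ) (hA : 2 ≤ A) (hB : |B| ≤ A-1)
    (hA' : 2 ≤ A') (hB' : |B'| ≤ A'-1) (M k : ℕ) :
    PowerSeries.coeff k (ThU A B M * ThU A' B' M)
      = ∑ p ∈ (Finset.Icc (-(M:ℤ)) (M:ℤ)) ×ˢ (Finset.Icc (-(M:ℤ)) (M:ℤ)),
          (if A*p.1^2+B*p.1 + (A'*p.2^2+B'*p.2) = (k:ℤ) then (1:ℤ) else 0) := by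
  unfold ThU
  rw [Finset.sum_mul_sum, Finset.sum_product]
  rw [map_sum]
  apply Finset.sum_congr rfl
  intro j _
  rw [map_sum]
  apply Finset.sum_congr rfl
  intro j' _
  dsimp only
  rw [← pow_add, PowerSeries.coeff_X_pow]
  have h1 : 0 ≤ A*j^2+B*j := quad_nonneg A B j hA hB
  have h2 : 0 ≤ A'*j'^2+B'*j' := quad_nonneg A' B' j' hA' hB'
  exact if_congr (by omega) rfl rfl

theorem coeff_X_ThU_mul (A B A' B' : ℤ) (hA : 2 ≤ A) (hB : |B| ≤ A-1)
    (hA' : 2 ≤ A') (hB' : |B'| ≤ A'-1) (M k : ℕ) :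
    PowerSeries.coeff k (PowerSeries.X * (ThU A B M * ThU A' B' M))
      = ∑ p ∈ (Finset.Icc (-(M:ℤ)) (M:ℤ)) ×ˢ (Finset.Icc (-(M:ℤ)) (M:ℤ)),
          (if 1 + (A*p.1^2+B*p.1) + (A'*p.2^2+B'*p.2) = (k:ℤ) then (1:ℤ) else 0) := by
  unfold ThU
  rw [Finset.sum_mul_sum, Finset.mul_sum, Finset.sum_product]
  rw [map_sum]
  apply Finset.sum_congr rfl
  intro j _
  rw [Finset.mul_sum, map_sum]
  apply Finset.sum_congr rfl
  intro j' _
  have hX : (PowerSeries.X : PowerSeries ℤ) *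
        (PowerSeries.X ^ ((A*j^2+B*j).toNat) * PowerSeries.X ^ ((A'*j'^2+B'*j').toNat))
      = PowerSeries.X ^ (1 + (A*j^2+B*j).toNat + (A'*j'^2+B'*j').toNat) := by
    rw [pow_add, pow_add, pow_one]; ring
  dsimp only
  rw [hX, PowerSeries.coeff_X_pow]
  have h1 : 0 ≤ A*j^2+B*j := quad_nonneg A B j hA hB
  have h2 : 0 ≤ A'*j'^2+B'*j' := quad_nonneg A' B' j' hA' hB'
  exact if_congr (by omega) rfl rfl

theorem coeff_Tc_mul (M k : ℕ) :
    PowerSeries.coeff k (Tc 1 M * Tc 0 M)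
      = ∑ p ∈ (Finset.Icc (-(M:ℤ)) (M:ℤ)) ×ˢ (Finset.Icc (-(M:ℤ)) (M:ℤ)),
          (if (2*p.1^2 - p.1) + 2*p.2^2 = (k:ℤ)
            then (((p.1+p.2).negOnePow : ℤˣ) : ℤ) else 0) := by
  unfold Tc
  rw [Finset.sum_mul_sum, Finset.sum_product]
  rw [map_sum]
  apply Finset.sum_congr rfl
  intro s _
  rw [map_sum]
  apply Finset.sum_congr rfl
  intro d _
  dsimp only
  have hterm : (PowerSeries.C (s.negOnePow : ℤ) * PowerSeries.X ^ en 1 s) *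
        (PowerSeries.C (d.negOnePow : ℤ) * PowerSeries.X ^ en 0 d)
      = PowerSeries.C (((s.negOnePow * d.negOnePow : ℤˣ)):ℤ) *
          PowerSeries.X ^ (en 1 s + en 0 d) := by
    rw [pow_add]
    push_cast
    rw [map_mul]
    ring
  rw [hterm, PowerSeries.coeff_C_mul, PowerSeries.coeff_X_pow, en_one, en_zero]
  rw [mul_ite, mul_one, mul_zero]
  rw [← Int.negOnePow_add]
  have h1 : 0 ≤ 2*s^2 - s := by
    have := quad_nonneg 2 (-1) s (by norm_num) (by norm_num)
    linarith [this]
  have h2 : 0 ≤ 2*d^2 := by positivity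
  exact if_congr (by omega) rfl rfl
section Comb

variable (M k : ℕ)

/-- abbreviation for the window square -/
noncomputable def Wsq (M : ℕ) : Finset (ℤ × ℤ) :=
  (Finset.Icc (-(M:ℤ)) (M:ℤ)) ×ˢ (Finset.Icc (-(M:ℤ)) (M:ℤ))

theorem bij_even (N M k : ℕ) (hk : k ≤ N) (hM : 2*N+2 ≤ M) :
    ∑ p ∈ (Wsq M).filter (fun p => 4*p.1^2+(-1)*p.1 + (4*p.2^2+(-1)*p.2) = (k:ℤ)), (1:ℤ)
    = ∑ p ∈ (Wsq M).filter
        (fun p => Even (p.1+p.2) ∧ (2*p.1^2 - p.1) + 2*p.2^2 = (k:ℤ)), (1:ℤ) := by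
  apply Finset.sum_nbij' (fun p => (p.1+p.2, p.1-p.2))
    (fun q => ((q.1+q.2)/2, (q.1-q.2)/2))
  · -- forward membership
    intro a ha
    rw [Finset.mem_filter] at ha ⊢
    obtain ⟨haW, hcond⟩ := ha
    rw [Wsq, Finset.mem_product, Finset.mem_Icc, Finset.mem_Icc] at haW
    have h1 := abs_le_quad 4 (-1) a.1 (by norm_num) (by norm_num)
    have h2 := abs_le_quad 4 (-1) a.2 (by norm_num) (by norm_num)
    have hb : a.1.natAbs ≤ k ∧ a.2.natAbs ≤ k := by
      generalize hgx : 4*a.1^2+(-1)*a.1 = u at hcond h1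
      generalize hgy : 4*a.2^2+(-1)*a.2 = v at hcond h2
      omega
    refine ⟨?_, ⟨a.1, by dsimp; ring⟩, by dsimp; linear_combination hcond⟩
    rw [Wsq, Finset.mem_product, Finset.mem_Icc, Finset.mem_Icc]
    constructor <;> constructor <;> dsimp <;> omega
  · -- backward membership
    intro q hq
    rw [Finset.mem_filter] at hq ⊢
    obtain ⟨hqW, hev, hcond⟩ := hq
    rw [Wsq, Finset.mem_product, Finset.mem_Icc, Finset.mem_Icc] at hqW
    obtain ⟨w, hw⟩ := hev
    have h1 : (q.1.natAbs:ℤ) ≤ 2*q.1^2 - q.1 := by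
      have := abs_le_quad 2 (-1) q.1 (by norm_num) (by norm_num)
      linarith
    have h2 : (q.2.natAbs:ℤ) ≤ 2*q.2^2 := by
      have := abs_le_quad 2 0 q.2 (by norm_num) (by norm_num)
      linarith
    have hb : q.1.natAbs ≤ k ∧ q.2.natAbs ≤ k := by
      generalize hgx : 2*q.1^2 - q.1 = u at hcond h1
      generalize hgy : 2*q.2^2 = v at hcond h2
      omega
    have hd1 : (q.1+q.2)/2 = w := by omega
    have hd2 : (q.1-q.2)/2 = w - q.2 := by omega
    constructor
    · rw [Wsq, Finset.mem_product, Finset.mem_Icc, Finset.mem_Icc]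
      constructor <;> constructor <;> dsimp <;> omega
    · dsimp
      rw [hd1, hd2]
      have hq1 : q.1 = 2*w - q.2 := by omega
      rw [hq1] at hcond
      linear_combination hcond
  · intro a _
    apply Prod.ext <;> dsimp <;> omega
  · intro q hq
    rw [Finset.mem_filter] at hq
    obtain ⟨_, hev, _⟩ := hq
    obtain ⟨w, hw⟩ := hev
    apply Prod.ext <;> dsimp <;> omega
  · intro a _
    rfl

theorem bij_odd (N M k : ℕ) (hk : k ≤ N) (hM : 2*N+2 ≤ M) :
    ∑ p ∈ (Wsq M).filter (fun p => 1 + (4*p.1^2+3*p.1) + (4*p.2^2+3*p.2) = (k:ℤ)), (1:ℤ)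
    = ∑ p ∈ (Wsq M).filter
        (fun p => ¬ Even (p.1+p.2) ∧ (2*p.1^2 - p.1) + 2*p.2^2 = (k:ℤ)), (1:ℤ) := by
  apply Finset.sum_nbij' (fun p => (p.1+p.2+1, p.1-p.2))
    (fun q => ((q.1+q.2-1)/2, (q.1-q.2-1)/2))
  · intro a ha
    rw [Finset.mem_filter] at ha ⊢
    obtain ⟨haW, hcond⟩ := ha
    rw [Wsq, Finset.mem_product, Finset.mem_Icc, Finset.mem_Icc] at haW
    have h1 := abs_le_quad 4 3 a.1 (by norm_num) (by norm_num)
    have h2 := abs_le_quad 4 3 a.2 (by norm_num) (by norm_num)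
    have hb : a.1.natAbs ≤ k ∧ a.2.natAbs ≤ k := by
      generalize hgx : 4*a.1^2+3*a.1 = u at hcond h1
      generalize hgy : 4*a.2^2+3*a.2 = v at hcond h2
      omega
    refine ⟨?_, ?_, by dsimp; linear_combination hcond⟩
    · rw [Wsq, Finset.mem_product, Finset.mem_Icc, Finset.mem_Icc]
      constructor <;> constructor <;> dsimp <;> omega
    · dsimp
      intro hev
      obtain ⟨w, hw⟩ := hev
      omega
  · intro q hq
    rw [Finset.mem_filter] at hq ⊢
    obtain ⟨hqW, hodd, hcond⟩ := hq
    rw [Wsq, Finset.mem_product, Finset.mem_Icc, Finset.mem_Icc] at hqW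
    rw [Int.not_even_iff_odd] at hodd
    obtain ⟨w, hw⟩ := hodd
    have h1 : (q.1.natAbs:ℤ) ≤ 2*q.1^2 - q.1 := by
      have := abs_le_quad 2 (-1) q.1 (by norm_num) (by norm_num)
      linarith
    have h2 : (q.2.natAbs:ℤ) ≤ 2*q.2^2 := by
      have := abs_le_quad 2 0 q.2 (by norm_num) (by norm_num)
      linarith
    have hb : q.1.natAbs ≤ k ∧ q.2.natAbs ≤ k := by
      generalize hgx : 2*q.1^2 - q.1 = u at hcond h1
      generalize hgy : 2*q.2^2 = v at hcond h2
      omega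
    have hd1 : (q.1+q.2-1)/2 = w := by omega
    have hd2 : (q.1-q.2-1)/2 = w - q.2 := by omega
    constructor
    · rw [Wsq, Finset.mem_product, Finset.mem_Icc, Finset.mem_Icc]
      constructor <;> constructor <;> dsimp <;> omega
    · dsimp
      rw [hd1, hd2]
      have hq1 : q.1 = 2*w + 1 - q.2 := by omega
      rw [hq1] at hcond
      linear_combination hcond
  · intro a _
    apply Prod.ext <;> dsimp <;> omega
  · intro q hq
    rw [Finset.mem_filter] at hq
    obtain ⟨_, hodd, _⟩ := hq
    rw [Int.not_even_iff_odd] at hodd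
    obtain ⟨w, hw⟩ := hodd
    apply Prod.ext <;> dsimp <;> omega
  · intro a _
    rfl

theorem comb (N M k : ℕ) (hk : k ≤ N) (hM : 2*N+2 ≤ M) :
    (∑ p ∈ Wsq M, (if 4*p.1^2+(-1)*p.1 + (4*p.2^2+(-1)*p.2) = (k:ℤ) then (1:ℤ) else 0))
    - (∑ p ∈ Wsq M, (if 1 + (4*p.1^2+3*p.1) + (4*p.2^2+3*p.2) = (k:ℤ) then (1:ℤ) else 0))
    = ∑ p ∈ Wsq M, (if (2*p.1^2 - p.1) + 2*p.2^2 = (k:ℤ)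
        then (((p.1+p.2).negOnePow : ℤˣ) : ℤ) else 0) := by
  rw [← Finset.sum_filter_add_sum_filter_not (Wsq M) (fun p => Even (p.1+p.2))
    (fun p => (if (2*p.1^2 - p.1) + 2*p.2^2 = (k:ℤ)
        then (((p.1+p.2).negOnePow : ℤˣ) : ℤ) else 0))]
  have hSe : ∑ p ∈ (Wsq M).filter (fun p => Even (p.1+p.2)),
        (if (2*p.1^2 - p.1) + 2*p.2^2 = (k:ℤ)
          then (((p.1+p.2).negOnePow : ℤˣ) : ℤ) else 0)
      = ∑ p ∈ (Wsq M).filter (fun p => Even (p.1+p.2)),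
        (if (2*p.1^2 - p.1) + 2*p.2^2 = (k:ℤ) then (1:ℤ) else 0) := by
    apply Finset.sum_congr rfl
    intro p hp
    rw [Finset.mem_filter] at hp
    rw [Int.negOnePow_even _ hp.2]
    simp
  have hSo : ∑ p ∈ (Wsq M).filter (fun p => ¬ Even (p.1+p.2)),
        (if (2*p.1^2 - p.1) + 2*p.2^2 = (k:ℤ)
          then (((p.1+p.2).negOnePow : ℤˣ) : ℤ) else 0)
      = -∑ p ∈ (Wsq M).filter (fun p => ¬ Even (p.1+p.2)),
        (if (2*p.1^2 - p.1) + 2*p.2^2 = (k:ℤ) then (1:ℤ) else 0) := by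
    rw [← Finset.sum_neg_distrib]
    apply Finset.sum_congr rfl
    intro p hp
    rw [Finset.mem_filter] at hp
    rw [Int.negOnePow_odd _ (Int.not_even_iff_odd.mp hp.2)]
    split <;> simp
  rw [hSe, hSo]
  -- convert everything to sums of 1 over filters
  have e1 : (∑ p ∈ Wsq M, (if 4*p.1^2+(-1)*p.1 + (4*p.2^2+(-1)*p.2) = (k:ℤ) then (1:ℤ) else 0))
      = ∑ p ∈ (Wsq M).filter (fun p => 4*p.1^2+(-1)*p.1 + (4*p.2^2+(-1)*p.2) = (k:ℤ)), (1:ℤ) :=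
    (Finset.sum_filter _ _).symm
  have e2 : (∑ p ∈ Wsq M, (if 1 + (4*p.1^2+3*p.1) + (4*p.2^2+3*p.2) = (k:ℤ) then (1:ℤ) else 0))
      = ∑ p ∈ (Wsq M).filter (fun p => 1 + (4*p.1^2+3*p.1) + (4*p.2^2+3*p.2) = (k:ℤ)), (1:ℤ) :=
    (Finset.sum_filter _ _).symm
  have e3 : ∑ p ∈ (Wsq M).filter (fun p => Even (p.1+p.2)),
        (if (2*p.1^2 - p.1) + 2*p.2^2 = (k:ℤ) then (1:ℤ) else 0)
      = ∑ p ∈ (Wsq M).filter (fun p => Even (p.1+p.2) ∧ (2*p.1^2 - p.1) + 2*p.2^2 = (k:ℤ)), (1:ℤ) := by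
    rw [← Finset.filter_filter, Finset.sum_filter, Finset.sum_filter]
    exact (Finset.sum_filter _ _).symm
  have e4 : ∑ p ∈ (Wsq M).filter (fun p => ¬ Even (p.1+p.2)),
        (if (2*p.1^2 - p.1) + 2*p.2^2 = (k:ℤ) then (1:ℤ) else 0)
      = ∑ p ∈ (Wsq M).filter (fun p => ¬ Even (p.1+p.2) ∧ (2*p.1^2 - p.1) + 2*p.2^2 = (k:ℤ)), (1:ℤ) := by
    rw [← Finset.filter_filter, Finset.sum_filter, Finset.sum_filter]
    exact (Finset.sum_filter _ _).symm
  rw [e1, e2, e3, e4, bij_even N M k hk hM, bij_odd N M k hk hM]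
  ring

end Comb
end Stmt2Aux

/-- `f(q⁵,q³)² − q·f(q,q⁷)² = φ(q)·φ(q²)`. -/
theorem stmt2 :
    fJacobi 5 3 ^ 2 - (PowerSeries.X : PowerSeries ℤ) * fJacobi 1 7 ^ 2 =
      eulerPhi * eulerPhi2 := by
  apply PowerSeries.ext
  intro N
  set M := 2*N+2 with hMdef
  have h53 : EqB N (fJacobi 5 3) (ThU 4 (-1) M) :=
    fJ_eqb 5 3 4 (-1) (by norm_num) (by norm_num) (by norm_num) (by norm_num) N M (by omega)
  have h17 : EqB N (fJacobi 1 7) (ThU 4 3 M) :=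
    fJ_eqb 1 7 4 3 (by norm_num) (by norm_num) (by norm_num) (by norm_num) N M (by omega)
  have hXr : EqB N ((PowerSeries.X : PowerSeries ℤ)) (PowerSeries.X) := EqB.refl _ _
  have hL : EqB N (fJacobi 5 3 ^ 2 - PowerSeries.X * fJacobi 1 7 ^ 2)
      (ThU 4 (-1) M * ThU 4 (-1) M - PowerSeries.X * (ThU 4 3 M * ThU 4 3 M)) := by
    have e : fJacobi 5 3 ^ 2 - (PowerSeries.X : PowerSeries ℤ) * fJacobi 1 7 ^ 2
        = fJacobi 5 3 * fJacobi 5 3 - PowerSeries.X * (fJacobi 1 7 * fJacobi 1 7) := by ring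
    rw [e]
    exact EqB.sub (EqB.mul h53 h53) (EqB.mul hXr (EqB.mul h17 h17))
  have hB : EqB N (ThU 4 (-1) M * ThU 4 (-1) M - PowerSeries.X * (ThU 4 3 M * ThU 4 3 M))
      (Tc 1 M * Tc 0 M) := by
    intro k hk
    rw [map_sub,
      coeff_ThU_mul 4 (-1) 4 (-1) (by norm_num) (by norm_num) (by norm_num) (by norm_num) M k,
      coeff_X_ThU_mul 4 3 4 3 (by norm_num) (by norm_num) (by norm_num) (by norm_num) M k,
      coeff_Tc_mul M k]
    have hc := comb N M k hk (by omega)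
    unfold Wsq at hc
    exact hc
  have hT1 : EqB N (Tc 1 M) (Phi4 M * Pc 1 M) := theta_eq 1 (by norm_num) N M (by omega)
  have hT0 : EqB N (Tc 0 M) (Phi4 M * Pc 0 M) := theta_eq 0 (by norm_num) N M (by omega)
  have hTT : EqB N (Tc 1 M * Tc 0 M) ((Phi4 M * Pc 1 M) * (Phi4 M * Pc 0 M)) :=
    EqB.mul hT1 hT0
  have hPP : EqB N ((Phi4 M * Pc 1 M) * (Phi4 M * Pc 0 M)) (eulerPhi * eulerPhi2) := by
    rw [prod_combine M]
    exact (EqB.mul (eulerPhi_eqb N M (by omega)) (eulerPhi2_eqb N M (by omega))).symm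
  exact ((hL.trans hB).trans (hTT.trans hPP)) N le_rfl
end

section
/- In the ring of formal power series ℤ⟦q⟧, the following identity holds: φ(q)² = g(q⁷,q⁸)·g(q⁶,q⁹) − q·g(q⁴,q¹¹)·g(q³,q¹²) − q²·g(q,q¹⁴)·g(q³,q¹²) − q·g(q⁶,q⁹)·g(q²,q¹³) + q²·g(q⁵,q¹⁰)·g(1,q¹⁵). -/
namespace Stmt6Aux
open Finset PowerSeries

def E (a b : ℕ) (j : ℤ) : ℤ := (a : ℤ) * (j * (j - 1) / 2) + (b : ℤ) * (j * (j + 1) / 2)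

def sg (j : ℤ) : ℤ := if j % 2 = 0 then 1 else -1

lemma j_pred_nonneg (j : ℤ) : 0 ≤ j * (j - 1) := by
  rcases le_or_gt 1 j with h | h
  · exact mul_nonneg (by omega) (by omega)
  · exact mul_nonneg_of_nonpos_of_nonpos (by omega) (by omega)

lemma j_succ_nonneg (j : ℤ) : 0 ≤ j * (j + 1) := by
  rcases le_or_gt 0 j with h | h
  · exact mul_nonneg (by omega) (by omega)
  · exact mul_nonneg_of_nonpos_of_nonpos (by omega) (by omega)

lemma two_mul_div_pred (j : ℤ) : 2 * (j * (j - 1) / 2) = j * (j - 1) := by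
  have h : Even (j * (j - 1)) := by
    have := Int.even_mul_succ_self (j - 1)
    have e : (j - 1) * (j - 1 + 1) = j * (j - 1) := by ring
    rwa [e] at this
  rw [Int.even_iff] at h; omega

lemma two_mul_div_succ (j : ℤ) : 2 * (j * (j + 1) / 2) = j * (j + 1) := by
  have h : Even (j * (j + 1)) := Int.even_mul_succ_self j
  rw [Int.even_iff] at h; omega

lemma two_mul_E (a b : ℕ) (j : ℤ) :
    2 * E a b j = (a : ℤ) * (j * (j - 1)) + (b : ℤ) * (j * (j + 1)) := by
  unfold E
  calc 2 * ((a : ℤ) * (j * (j - 1) / 2) + (b : ℤ) * (j * (j + 1) / 2))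
      = (a : ℤ) * (2 * (j * (j - 1) / 2)) + (b : ℤ) * (2 * (j * (j + 1) / 2)) := by ring
    _ = _ := by rw [two_mul_div_pred, two_mul_div_succ]

lemma E_nonneg (a b : ℕ) (j : ℤ) : 0 ≤ E a b j := by
  unfold E
  have h1 : 0 ≤ j * (j - 1) / 2 := Int.ediv_nonneg (j_pred_nonneg j) (by norm_num)
  have h2 : 0 ≤ j * (j + 1) / 2 := Int.ediv_nonneg (j_succ_nonneg j) (by norm_num)
  positivity

lemma E_bound {a b : ℕ} (hab : 2 ≤ a + b) {j : ℤ} {n : ℕ} (h : E a b j ≤ (n : ℤ)) :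
    -(n : ℤ) - 1 ≤ j ∧ j ≤ (n : ℤ) + 1 := by
  have h2 := two_mul_E a b j
  have ha : (0:ℤ) ≤ (a:ℤ) := by positivity
  have hb : (0:ℤ) ≤ (b:ℤ) := by positivity
  have hab' : (2:ℤ) ≤ (a:ℤ) + b := by exact_mod_cast hab
  rcases le_or_gt 0 j with hj | hj
  · have hP : j * (j - 1) ≤ (n : ℤ) := by
      nlinarith [mul_nonneg hb (by nlinarith : (0:ℤ) ≤ j * (j + 1) - j * (j - 1)),
        mul_nonneg (by linarith : (0:ℤ) ≤ (a:ℤ) + b - 2) (j_pred_nonneg j)]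
    constructor
    · omega
    · by_contra hc
      push_neg at hc
      nlinarith [mul_nonneg (by omega : (0:ℤ) ≤ j - (n:ℤ) - 2) (by omega : (0:ℤ) ≤ j - 1)]
  · have hS : j * (j + 1) ≤ (n : ℤ) := by
      nlinarith [mul_nonneg ha (by nlinarith : (0:ℤ) ≤ j * (j - 1) - j * (j + 1)),
        mul_nonneg (by linarith : (0:ℤ) ≤ (a:ℤ) + b - 2) (j_succ_nonneg j)]
    constructor
    · by_contra hc
      push_neg at hc
      nlinarith [mul_nonneg (by omega : (0:ℤ) ≤ -j - (n:ℤ) - 2) (by omega : (0:ℤ) ≤ -j - 1)]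
    · omega

lemma neg_one_pow_natAbs (j : ℤ) : (-1 : ℤ) ^ j.natAbs = sg j := by
  unfold sg
  rcases Int.even_or_odd j with h | h
  · rw [if_pos (Int.even_iff.mp h)]
    exact Even.neg_one_pow (Int.natAbs_even.mpr h)
  · rw [if_neg (by rw [Int.odd_iff] at h; omega)]
    exact Odd.neg_one_pow (Int.natAbs_odd.mpr h)

lemma sg_natAbs (j : ℤ) : sg j = (-1 : ℤ) ^ j.natAbs := (neg_one_pow_natAbs j).symm

noncomputable def B (N : ℕ) : Finset ℤ := Icc (-(N : ℤ) - 1) ((N : ℤ) + 1)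

lemma coeff_gJacobi (a b : ℕ) (N : ℕ) :
    (coeff N) (gJacobi a b) = ∑ j ∈ B N, if E a b j = (N : ℤ) then sg j else 0 := by
  unfold gJacobi B
  rw [coeff_mk]
  refine sum_congr rfl fun j _ => ?_
  rw [neg_one_pow_natAbs]
  rfl

lemma coeff_gJacobi_le (a b : ℕ) (hab : 2 ≤ a + b) {N M : ℕ} (h : N ≤ M) :
    (coeff N) (gJacobi a b) = ∑ j ∈ B M, if E a b j = (N : ℤ) then sg j else 0 := by
  rw [coeff_gJacobi]
  apply Finset.sum_subset
  · apply Icc_subset_Icc <;> omega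
  · intro j _ hnj
    rw [if_neg]
    intro hc
    have := E_bound hab (le_of_eq hc)
    exact hnj (mem_Icc.mpr (by omega))

lemma sum_antidiag_if {M : ℕ} (x y z : ℤ) (hx : 0 ≤ x) (hy : 0 ≤ y) :
    (∑ pq ∈ Finset.HasAntidiagonal.antidiagonal M, if x = (pq.1 : ℤ) ∧ y = (pq.2 : ℤ) then z else 0)
      = if x + y = (M : ℤ) then z else 0 := by
  by_cases h : x + y = (M : ℤ)
  · rw [if_pos h]
    rw [Finset.sum_eq_single_of_mem (x.toNat, y.toNat)]
    · rw [if_pos ⟨by omega, by omega⟩]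
    · rw [Finset.HasAntidiagonal.mem_antidiagonal]; omega
    · rintro ⟨p, q⟩ hpq hne
      rw [if_neg]
      rintro ⟨h1, h2⟩
      exact hne (by rw [Prod.ext_iff]; constructor <;> simp <;> omega)
  · rw [if_neg h]
    apply Finset.sum_eq_zero
    rintro ⟨p, q⟩ hpq
    rw [Finset.HasAntidiagonal.mem_antidiagonal] at hpq
    rw [if_neg]
    rintro ⟨h1, h2⟩
    simp only at h1 h2
    omega

lemma coeff_X_pow_gg {t a b c d : ℕ} (N : ℕ) (hab : 2 ≤ a + b) (hcd : 2 ≤ c + d) :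
    (coeff N) ((X : PowerSeries ℤ) ^ t * (gJacobi a b * gJacobi c d)) =
      ∑ p ∈ B N ×ˢ B N,
        if (t : ℤ) + E a b p.1 + E c d p.2 = (N : ℤ) then sg p.1 * sg p.2 else 0 := by
  rw [PowerSeries.coeff_X_pow_mul']
  by_cases ht : t ≤ N
  · rw [if_pos ht]
    rw [PowerSeries.coeff_mul]
    have step1 : ∀ pq ∈ Finset.HasAntidiagonal.antidiagonal (N - t),
        (coeff pq.1) (gJacobi a b) * (coeff pq.2) (gJacobi c d) =
          ∑ p ∈ B N ×ˢ B N,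
            (if E a b p.1 = (pq.1 : ℤ) ∧ E c d p.2 = (pq.2 : ℤ) then sg p.1 * sg p.2 else 0) := by
      rintro ⟨p1, p2⟩ hpq
      rw [Finset.HasAntidiagonal.mem_antidiagonal] at hpq
      rw [coeff_gJacobi_le a b hab (show p1 ≤ N by omega),
          coeff_gJacobi_le c d hcd (show p2 ≤ N by omega),
          Finset.sum_mul_sum, Finset.sum_product]
      refine sum_congr rfl fun j _ => sum_congr rfl fun k _ => ?_
      split_ifs with h1 h2 h3 h4 <;> simp_all <;> ring
    rw [Finset.sum_congr rfl step1, Finset.sum_comm]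
    refine sum_congr rfl fun p hp => ?_
    have := sum_antidiag_if (M := N - t) (E a b p.1) (E c d p.2) (sg p.1 * sg p.2)
      (E_nonneg a b p.1) (E_nonneg c d p.2)
    rw [this]
    apply if_congr _ rfl rfl
    omega
  · rw [if_neg ht]
    symm
    apply Finset.sum_eq_zero
    intro p _
    rw [if_neg]
    have h1 := E_nonneg a b p.1
    have h2 := E_nonneg c d p.2
    omega


lemma sg_mul (m n : ℤ) : sg m * sg n = sg (m + n) := by
  unfold sg
  split_ifs <;> first | (exfalso; omega) | norm_num

lemma sg_congr {m n : ℤ} (h : (m - n) % 2 = 0) : sg m = sg n := by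
  unfold sg
  split_ifs <;> first | rfl | omega

lemma sg_neg_congr {m n : ℤ} (h : (m - n) % 2 ≠ 0) : sg m = -sg n := by
  unfold sg
  split_ifs <;> first | (exfalso; omega) | norm_num

lemma dE12 (j : ℤ) : 2 * E 1 2 j = 3 * j ^ 2 + j := by rw [two_mul_E]; push_cast; ring
lemma dE78 (j : ℤ) : 2 * E 7 8 j = 15 * j ^ 2 + j := by rw [two_mul_E]; push_cast; ring
lemma dE69 (j : ℤ) : 2 * E 6 9 j = 15 * j ^ 2 + 3 * j := by rw [two_mul_E]; push_cast; ring
lemma dE411 (j : ℤ) : 2 * E 4 11 j = 15 * j ^ 2 + 7 * j := by rw [two_mul_E]; push_cast; ring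
lemma dE312 (j : ℤ) : 2 * E 3 12 j = 15 * j ^ 2 + 9 * j := by rw [two_mul_E]; push_cast; ring
lemma dE114 (j : ℤ) : 2 * E 1 14 j = 15 * j ^ 2 + 13 * j := by rw [two_mul_E]; push_cast; ring
lemma dE213 (j : ℤ) : 2 * E 2 13 j = 15 * j ^ 2 + 11 * j := by rw [two_mul_E]; push_cast; ring
lemma dE510 (j : ℤ) : 2 * E 5 10 j = 15 * j ^ 2 + 5 * j := by rw [two_mul_E]; push_cast; ring
lemma dE015 (j : ℤ) : 2 * E 0 15 j = 15 * j ^ 2 + 15 * j := by rw [two_mul_E]; push_cast; ring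


lemma main_identity (N : ℕ) :
    (∑ p ∈ B N ×ˢ B N, if ((0:ℕ):ℤ) + E 1 2 p.1 + E 1 2 p.2 = (N:ℤ) then sg p.1 * sg p.2 else 0)
  = (∑ p ∈ B N ×ˢ B N, if ((0:ℕ):ℤ) + E 7 8 p.1 + E 6 9 p.2 = (N:ℤ) then sg p.1 * sg p.2 else 0)
  - (∑ p ∈ B N ×ˢ B N, if ((1:ℕ):ℤ) + E 4 11 p.1 + E 3 12 p.2 = (N:ℤ) then sg p.1 * sg p.2 else 0)
  - (∑ p ∈ B N ×ˢ B N, if ((2:ℕ):ℤ) + E 1 14 p.1 + E 3 12 p.2 = (N:ℤ) then sg p.1 * sg p.2 else 0)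
  - (∑ p ∈ B N ×ˢ B N, if ((1:ℕ):ℤ) + E 6 9 p.1 + E 2 13 p.2 = (N:ℤ) then sg p.1 * sg p.2 else 0)
  + (∑ p ∈ B N ×ˢ B N, if ((2:ℕ):ℤ) + E 5 10 p.1 + E 0 15 p.2 = (N:ℤ) then sg p.1 * sg p.2 else 0) := by
  classical
  simp only [← Finset.sum_filter]
  set F0 := (B N ×ˢ B N).filter
      (fun p => ((0:ℕ):ℤ) + E 1 2 p.1 + E 1 2 p.2 = (N:ℤ)) with hF0

  have hcoset0 :
      (∑ p ∈ F0.filter (fun p => (2*p.1 - p.2) % 5 = 0), sg p.1 * sg p.2)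
      = ∑ p ∈ (B N ×ˢ B N).filter
          (fun p => ((0:ℕ):ℤ) + E 7 8 p.1 + E 6 9 p.2 = (N:ℤ)),
          sg p.1 * sg p.2 := by
    refine Finset.sum_bij' (i := fun p _ => ((2*p.1 - p.2)/5, (p.1 + 2*p.2)/5))
      (j := fun q _ => (q.2 + 2*q.1, 2*q.2 - q.1)) ?_ ?_ ?_ ?_ ?_
    · rintro ⟨j, k⟩ hp
      simp only [hF0, Finset.mem_filter, Finset.mem_product, Finset.mem_Icc, B] at hp ⊢
      obtain ⟨⟨⟨⟨hb1, hb2⟩, ⟨hb3, hb4⟩⟩, hcond⟩, hc⟩ := hp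
      push_cast at hcond
      set u : ℤ := ((2*j - k)/5) with hu
      set v : ℤ := ((j + 2*k)/5) with hv
      have hjk : j = v + 2*u ∧ k = 2*v - u := by omega
      have h2 : 3*j^2 + j + (3*k^2 + k) = 2*(N:ℤ) := by
        linear_combination 2*hcond - dE12 j - dE12 k
      rw [hjk.1, hjk.2] at h2
      have t2 : 2*(((0:ℕ):ℤ) + E 7 8 u + E 6 9 v) = 2*(N:ℤ) := by
        push_cast
        linear_combination h2 + dE78 u + dE69 v
      have tc : ((0:ℕ):ℤ) + E 7 8 u + E 6 9 v = (N:ℤ) := by linarith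
      have bu := E_bound (show 2 ≤ 7+8 by norm_num)
        (show E 7 8 u ≤ (N:ℤ) by have h1 := E_nonneg 6 9 v; push_cast at tc; linarith)
      have bv := E_bound (show 2 ≤ 6+9 by norm_num)
        (show E 6 9 v ≤ (N:ℤ) by have h1 := E_nonneg 7 8 u; push_cast at tc; linarith)
      exact ⟨⟨⟨bu.1, bu.2⟩, ⟨bv.1, bv.2⟩⟩, tc⟩
    · rintro ⟨u, v⟩ hp
      simp only [hF0, Finset.mem_filter, Finset.mem_product, Finset.mem_Icc, B] at hp ⊢
      obtain ⟨⟨⟨hb1, hb2⟩, ⟨hb3, hb4⟩⟩, hcond⟩ := hp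
      push_cast at hcond
      have h2 : 15*u^2 + u + (15*v^2 + 3*v) + 0 = 2*(N:ℤ) := by
        linear_combination 2*hcond - dE78 u - dE69 v
      have t2 : 2*(((0:ℕ):ℤ) + E 1 2 (v + 2*u) + E 1 2 (2*v - u)) = 2*(N:ℤ) := by
        push_cast
        linear_combination h2 + dE12 (v + 2*u) + dE12 (2*v - u)
      have tc : ((0:ℕ):ℤ) + E 1 2 (v + 2*u) + E 1 2 (2*v - u) = (N:ℤ) := by linarith
      have bj := E_bound (show 2 ≤ 1+2 by norm_num)
        (show E 1 2 (v + 2*u) ≤ (N:ℤ) by have h1 := E_nonneg 1 2 (2*v - u); push_cast at tc; linarith)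
      have bk := E_bound (show 2 ≤ 1+2 by norm_num)
        (show E 1 2 (2*v - u) ≤ (N:ℤ) by have h1 := E_nonneg 1 2 (v + 2*u); push_cast at tc; linarith)
      refine ⟨⟨⟨⟨bj.1, bj.2⟩, ⟨bk.1, bk.2⟩⟩, tc⟩, by omega⟩
    · rintro ⟨j, k⟩ hp
      simp only [hF0, Finset.mem_filter] at hp
      have hc := hp.2
      simp only [Prod.mk.injEq]
      constructor <;> omega
    · rintro ⟨u, v⟩ _
      simp only [Prod.mk.injEq]
      constructor <;> omega
    · rintro ⟨j, k⟩ hp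
      simp only [hF0, Finset.mem_filter] at hp
      have hc := hp.2
      dsimp only
      rw [sg_mul, sg_mul]
      exact sg_congr (by omega)

  have hcoset1 :
      (∑ p ∈ F0.filter (fun p => (2*p.1 - p.2) % 5 = 1), sg p.1 * sg p.2)
      = ∑ p ∈ (B N ×ˢ B N).filter
          (fun p => ((1:ℕ):ℤ) + E 4 11 p.1 + E 3 12 p.2 = (N:ℤ)),
          -(sg p.1 * sg p.2) := by
    refine Finset.sum_bij' (i := fun p _ => ((2*p.1 - p.2 - 1)/5, (-p.1 - 2*p.2 - 2)/5))
      (j := fun q _ => (2*q.1 - q.2, -q.1 - 2*q.2 - 1)) ?_ ?_ ?_ ?_ ?_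
    · rintro ⟨j, k⟩ hp
      simp only [hF0, Finset.mem_filter, Finset.mem_product, Finset.mem_Icc, B] at hp ⊢
      obtain ⟨⟨⟨⟨hb1, hb2⟩, ⟨hb3, hb4⟩⟩, hcond⟩, hc⟩ := hp
      push_cast at hcond
      set u : ℤ := ((2*j - k - 1)/5) with hu
      set v : ℤ := ((-j - 2*k - 2)/5) with hv
      have hjk : j = 2*u - v ∧ k = -u - 2*v - 1 := by omega
      have h2 : 3*j^2 + j + (3*k^2 + k) = 2*(N:ℤ) := by
        linear_combination 2*hcond - dE12 j - dE12 k
      rw [hjk.1, hjk.2] at h2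
      have t2 : 2*(((1:ℕ):ℤ) + E 4 11 u + E 3 12 v) = 2*(N:ℤ) := by
        push_cast
        linear_combination h2 + dE411 u + dE312 v
      have tc : ((1:ℕ):ℤ) + E 4 11 u + E 3 12 v = (N:ℤ) := by linarith
      have bu := E_bound (show 2 ≤ 4+11 by norm_num)
        (show E 4 11 u ≤ (N:ℤ) by have h1 := E_nonneg 3 12 v; push_cast at tc; linarith)
      have bv := E_bound (show 2 ≤ 3+12 by norm_num)
        (show E 3 12 v ≤ (N:ℤ) by have h1 := E_nonneg 4 11 u; push_cast at tc; linarith)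
      exact ⟨⟨⟨bu.1, bu.2⟩, ⟨bv.1, bv.2⟩⟩, tc⟩
    · rintro ⟨u, v⟩ hp
      simp only [hF0, Finset.mem_filter, Finset.mem_product, Finset.mem_Icc, B] at hp ⊢
      obtain ⟨⟨⟨hb1, hb2⟩, ⟨hb3, hb4⟩⟩, hcond⟩ := hp
      push_cast at hcond
      have h2 : 15*u^2 + 7*u + (15*v^2 + 9*v) + 2 = 2*(N:ℤ) := by
        linear_combination 2*hcond - dE411 u - dE312 v
      have t2 : 2*(((0:ℕ):ℤ) + E 1 2 (2*u - v) + E 1 2 (-u - 2*v - 1)) = 2*(N:ℤ) := by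
        push_cast
        linear_combination h2 + dE12 (2*u - v) + dE12 (-u - 2*v - 1)
      have tc : ((0:ℕ):ℤ) + E 1 2 (2*u - v) + E 1 2 (-u - 2*v - 1) = (N:ℤ) := by linarith
      have bj := E_bound (show 2 ≤ 1+2 by norm_num)
        (show E 1 2 (2*u - v) ≤ (N:ℤ) by have h1 := E_nonneg 1 2 (-u - 2*v - 1); push_cast at tc; linarith)
      have bk := E_bound (show 2 ≤ 1+2 by norm_num)
        (show E 1 2 (-u - 2*v - 1) ≤ (N:ℤ) by have h1 := E_nonneg 1 2 (2*u - v); push_cast at tc; linarith)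
      refine ⟨⟨⟨⟨bj.1, bj.2⟩, ⟨bk.1, bk.2⟩⟩, tc⟩, by omega⟩
    · rintro ⟨j, k⟩ hp
      simp only [hF0, Finset.mem_filter] at hp
      have hc := hp.2
      simp only [Prod.mk.injEq]
      constructor <;> omega
    · rintro ⟨u, v⟩ _
      simp only [Prod.mk.injEq]
      constructor <;> omega
    · rintro ⟨j, k⟩ hp
      simp only [hF0, Finset.mem_filter] at hp
      have hc := hp.2
      dsimp only
      rw [sg_mul, sg_mul]
      exact sg_neg_congr (by omega)

  have hcoset2 :
      (∑ p ∈ F0.filter (fun p => (2*p.1 - p.2) % 5 = 2), sg p.1 * sg p.2)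
      = ∑ p ∈ (B N ×ˢ B N).filter
          (fun p => ((2:ℕ):ℤ) + E 1 14 p.1 + E 3 12 p.2 = (N:ℤ)),
          -(sg p.1 * sg p.2) := by
    refine Finset.sum_bij' (i := fun p _ => ((2*p.1 - p.2 - 2)/5, (p.1 + 2*p.2 - 1)/5))
      (j := fun q _ => (q.2 + 2*q.1 + 1, 2*q.2 - q.1)) ?_ ?_ ?_ ?_ ?_
    · rintro ⟨j, k⟩ hp
      simp only [hF0, Finset.mem_filter, Finset.mem_product, Finset.mem_Icc, B] at hp ⊢
      obtain ⟨⟨⟨⟨hb1, hb2⟩, ⟨hb3, hb4⟩⟩, hcond⟩, hc⟩ := hp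
      push_cast at hcond
      set u : ℤ := ((2*j - k - 2)/5) with hu
      set v : ℤ := ((j + 2*k - 1)/5) with hv
      have hjk : j = v + 2*u + 1 ∧ k = 2*v - u := by omega
      have h2 : 3*j^2 + j + (3*k^2 + k) = 2*(N:ℤ) := by
        linear_combination 2*hcond - dE12 j - dE12 k
      rw [hjk.1, hjk.2] at h2
      have t2 : 2*(((2:ℕ):ℤ) + E 1 14 u + E 3 12 v) = 2*(N:ℤ) := by
        push_cast
        linear_combination h2 + dE114 u + dE312 v
      have tc : ((2:ℕ):ℤ) + E 1 14 u + E 3 12 v = (N:ℤ) := by linarith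
      have bu := E_bound (show 2 ≤ 1+14 by norm_num)
        (show E 1 14 u ≤ (N:ℤ) by have h1 := E_nonneg 3 12 v; push_cast at tc; linarith)
      have bv := E_bound (show 2 ≤ 3+12 by norm_num)
        (show E 3 12 v ≤ (N:ℤ) by have h1 := E_nonneg 1 14 u; push_cast at tc; linarith)
      exact ⟨⟨⟨bu.1, bu.2⟩, ⟨bv.1, bv.2⟩⟩, tc⟩
    · rintro ⟨u, v⟩ hp
      simp only [hF0, Finset.mem_filter, Finset.mem_product, Finset.mem_Icc, B] at hp ⊢
      obtain ⟨⟨⟨hb1, hb2⟩, ⟨hb3, hb4⟩⟩, hcond⟩ := hp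
      push_cast at hcond
      have h2 : 15*u^2 + 13*u + (15*v^2 + 9*v) + 4 = 2*(N:ℤ) := by
        linear_combination 2*hcond - dE114 u - dE312 v
      have t2 : 2*(((0:ℕ):ℤ) + E 1 2 (v + 2*u + 1) + E 1 2 (2*v - u)) = 2*(N:ℤ) := by
        push_cast
        linear_combination h2 + dE12 (v + 2*u + 1) + dE12 (2*v - u)
      have tc : ((0:ℕ):ℤ) + E 1 2 (v + 2*u + 1) + E 1 2 (2*v - u) = (N:ℤ) := by linarith
      have bj := E_bound (show 2 ≤ 1+2 by norm_num)
        (show E 1 2 (v + 2*u + 1) ≤ (N:ℤ) by have h1 := E_nonneg 1 2 (2*v - u); push_cast at tc; linarith)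
      have bk := E_bound (show 2 ≤ 1+2 by norm_num)
        (show E 1 2 (2*v - u) ≤ (N:ℤ) by have h1 := E_nonneg 1 2 (v + 2*u + 1); push_cast at tc; linarith)
      refine ⟨⟨⟨⟨bj.1, bj.2⟩, ⟨bk.1, bk.2⟩⟩, tc⟩, by omega⟩
    · rintro ⟨j, k⟩ hp
      simp only [hF0, Finset.mem_filter] at hp
      have hc := hp.2
      simp only [Prod.mk.injEq]
      constructor <;> omega
    · rintro ⟨u, v⟩ _
      simp only [Prod.mk.injEq]
      constructor <;> omega
    · rintro ⟨j, k⟩ hp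
      simp only [hF0, Finset.mem_filter] at hp
      have hc := hp.2
      dsimp only
      rw [sg_mul, sg_mul]
      exact sg_neg_congr (by omega)

  have hcoset3 :
      (∑ p ∈ F0.filter (fun p => (2*p.1 - p.2) % 5 = 3), sg p.1 * sg p.2)
      = ∑ p ∈ (B N ×ˢ B N).filter
          (fun p => ((1:ℕ):ℤ) + E 6 9 p.1 + E 2 13 p.2 = (N:ℤ)),
          -(sg p.1 * sg p.2) := by
    refine Finset.sum_bij' (i := fun p _ => ((-p.1 - 2*p.2 - 1)/5, (-2*p.1 + p.2 - 2)/5))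
      (j := fun q _ => (-q.1 - 2*q.2 - 1, -2*q.1 + q.2)) ?_ ?_ ?_ ?_ ?_
    · rintro ⟨j, k⟩ hp
      simp only [hF0, Finset.mem_filter, Finset.mem_product, Finset.mem_Icc, B] at hp ⊢
      obtain ⟨⟨⟨⟨hb1, hb2⟩, ⟨hb3, hb4⟩⟩, hcond⟩, hc⟩ := hp
      push_cast at hcond
      set u : ℤ := ((-j - 2*k - 1)/5) with hu
      set v : ℤ := ((-2*j + k - 2)/5) with hv
      have hjk : j = -u - 2*v - 1 ∧ k = -2*u + v := by omega
      have h2 : 3*j^2 + j + (3*k^2 + k) = 2*(N:ℤ) := by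
        linear_combination 2*hcond - dE12 j - dE12 k
      rw [hjk.1, hjk.2] at h2
      have t2 : 2*(((1:ℕ):ℤ) + E 6 9 u + E 2 13 v) = 2*(N:ℤ) := by
        push_cast
        linear_combination h2 + dE69 u + dE213 v
      have tc : ((1:ℕ):ℤ) + E 6 9 u + E 2 13 v = (N:ℤ) := by linarith
      have bu := E_bound (show 2 ≤ 6+9 by norm_num)
        (show E 6 9 u ≤ (N:ℤ) by have h1 := E_nonneg 2 13 v; push_cast at tc; linarith)
      have bv := E_bound (show 2 ≤ 2+13 by norm_num)
        (show E 2 13 v ≤ (N:ℤ) by have h1 := E_nonneg 6 9 u; push_cast at tc; linarith)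
      exact ⟨⟨⟨bu.1, bu.2⟩, ⟨bv.1, bv.2⟩⟩, tc⟩
    · rintro ⟨u, v⟩ hp
      simp only [hF0, Finset.mem_filter, Finset.mem_product, Finset.mem_Icc, B] at hp ⊢
      obtain ⟨⟨⟨hb1, hb2⟩, ⟨hb3, hb4⟩⟩, hcond⟩ := hp
      push_cast at hcond
      have h2 : 15*u^2 + 3*u + (15*v^2 + 11*v) + 2 = 2*(N:ℤ) := by
        linear_combination 2*hcond - dE69 u - dE213 v
      have t2 : 2*(((0:ℕ):ℤ) + E 1 2 (-u - 2*v - 1) + E 1 2 (-2*u + v)) = 2*(N:ℤ) := by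
        push_cast
        linear_combination h2 + dE12 (-u - 2*v - 1) + dE12 (-2*u + v)
      have tc : ((0:ℕ):ℤ) + E 1 2 (-u - 2*v - 1) + E 1 2 (-2*u + v) = (N:ℤ) := by linarith
      have bj := E_bound (show 2 ≤ 1+2 by norm_num)
        (show E 1 2 (-u - 2*v - 1) ≤ (N:ℤ) by have h1 := E_nonneg 1 2 (-2*u + v); push_cast at tc; linarith)
      have bk := E_bound (show 2 ≤ 1+2 by norm_num)
        (show E 1 2 (-2*u + v) ≤ (N:ℤ) by have h1 := E_nonneg 1 2 (-u - 2*v - 1); push_cast at tc; linarith)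
      refine ⟨⟨⟨⟨bj.1, bj.2⟩, ⟨bk.1, bk.2⟩⟩, tc⟩, by omega⟩
    · rintro ⟨j, k⟩ hp
      simp only [hF0, Finset.mem_filter] at hp
      have hc := hp.2
      simp only [Prod.mk.injEq]
      constructor <;> omega
    · rintro ⟨u, v⟩ _
      simp only [Prod.mk.injEq]
      constructor <;> omega
    · rintro ⟨j, k⟩ hp
      simp only [hF0, Finset.mem_filter] at hp
      have hc := hp.2
      dsimp only
      rw [sg_mul, sg_mul]
      exact sg_neg_congr (by omega)

  have hcoset4 :
      (∑ p ∈ F0.filter (fun p => (2*p.1 - p.2) % 5 = 4), sg p.1 * sg p.2)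
      = ∑ p ∈ (B N ×ˢ B N).filter
          (fun p => ((2:ℕ):ℤ) + E 5 10 p.1 + E 0 15 p.2 = (N:ℤ)),
          sg p.1 * sg p.2 := by
    refine Finset.sum_bij' (i := fun p _ => ((-2*p.1 + p.2 - 1)/5, (-p.1 - 2*p.2 - 3)/5))
      (j := fun q _ => (-q.2 - 2*q.1 - 1, -2*q.2 + q.1 - 1)) ?_ ?_ ?_ ?_ ?_
    · rintro ⟨j, k⟩ hp
      simp only [hF0, Finset.mem_filter, Finset.mem_product, Finset.mem_Icc, B] at hp ⊢
      obtain ⟨⟨⟨⟨hb1, hb2⟩, ⟨hb3, hb4⟩⟩, hcond⟩, hc⟩ := hp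
      push_cast at hcond
      set u : ℤ := ((-2*j + k - 1)/5) with hu
      set v : ℤ := ((-j - 2*k - 3)/5) with hv
      have hjk : j = -v - 2*u - 1 ∧ k = -2*v + u - 1 := by omega
      have h2 : 3*j^2 + j + (3*k^2 + k) = 2*(N:ℤ) := by
        linear_combination 2*hcond - dE12 j - dE12 k
      rw [hjk.1, hjk.2] at h2
      have t2 : 2*(((2:ℕ):ℤ) + E 5 10 u + E 0 15 v) = 2*(N:ℤ) := by
        push_cast
        linear_combination h2 + dE510 u + dE015 v
      have tc : ((2:ℕ):ℤ) + E 5 10 u + E 0 15 v = (N:ℤ) := by linarith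
      have bu := E_bound (show 2 ≤ 5+10 by norm_num)
        (show E 5 10 u ≤ (N:ℤ) by have h1 := E_nonneg 0 15 v; push_cast at tc; linarith)
      have bv := E_bound (show 2 ≤ 0+15 by norm_num)
        (show E 0 15 v ≤ (N:ℤ) by have h1 := E_nonneg 5 10 u; push_cast at tc; linarith)
      exact ⟨⟨⟨bu.1, bu.2⟩, ⟨bv.1, bv.2⟩⟩, tc⟩
    · rintro ⟨u, v⟩ hp
      simp only [hF0, Finset.mem_filter, Finset.mem_product, Finset.mem_Icc, B] at hp ⊢
      obtain ⟨⟨⟨hb1, hb2⟩, ⟨hb3, hb4⟩⟩, hcond⟩ := hp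
      push_cast at hcond
      have h2 : 15*u^2 + 5*u + (15*v^2 + 15*v) + 4 = 2*(N:ℤ) := by
        linear_combination 2*hcond - dE510 u - dE015 v
      have t2 : 2*(((0:ℕ):ℤ) + E 1 2 (-v - 2*u - 1) + E 1 2 (-2*v + u - 1)) = 2*(N:ℤ) := by
        push_cast
        linear_combination h2 + dE12 (-v - 2*u - 1) + dE12 (-2*v + u - 1)
      have tc : ((0:ℕ):ℤ) + E 1 2 (-v - 2*u - 1) + E 1 2 (-2*v + u - 1) = (N:ℤ) := by linarith
      have bj := E_bound (show 2 ≤ 1+2 by norm_num)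
        (show E 1 2 (-v - 2*u - 1) ≤ (N:ℤ) by have h1 := E_nonneg 1 2 (-2*v + u - 1); push_cast at tc; linarith)
      have bk := E_bound (show 2 ≤ 1+2 by norm_num)
        (show E 1 2 (-2*v + u - 1) ≤ (N:ℤ) by have h1 := E_nonneg 1 2 (-v - 2*u - 1); push_cast at tc; linarith)
      refine ⟨⟨⟨⟨bj.1, bj.2⟩, ⟨bk.1, bk.2⟩⟩, tc⟩, by omega⟩
    · rintro ⟨j, k⟩ hp
      simp only [hF0, Finset.mem_filter] at hp
      have hc := hp.2
      simp only [Prod.mk.injEq]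
      constructor <;> omega
    · rintro ⟨u, v⟩ _
      simp only [Prod.mk.injEq]
      constructor <;> omega
    · rintro ⟨j, k⟩ hp
      simp only [hF0, Finset.mem_filter] at hp
      have hc := hp.2
      dsimp only
      rw [sg_mul, sg_mul]
      exact sg_congr (by omega)

  have hfib := Finset.sum_fiberwise_of_maps_to (s := F0) (t := ({0,1,2,3,4} : Finset ℤ))
    (g := fun p => (2*p.1 - p.2) % 5)
    (fun x _ => by simp only [Finset.mem_insert, Finset.mem_singleton]; omega)
    (fun p => sg p.1 * sg p.2)
  rw [← hfib]
  rw [show ({0,1,2,3,4} : Finset ℤ) = insert 0 (insert 1 (insert 2 (insert 3 {4}))) from rfl]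
  rw [Finset.sum_insert (by decide), Finset.sum_insert (by decide),
      Finset.sum_insert (by decide), Finset.sum_insert (by decide), Finset.sum_singleton]
  rw [hcoset0, hcoset1, hcoset2, hcoset3, hcoset4]
  rw [Finset.sum_neg_distrib, Finset.sum_neg_distrib, Finset.sum_neg_distrib]
  ring


lemma coeff_eulerPhi (N : ℕ) :
    (coeff N) eulerPhi =
      ∑ t ∈ (range (N+1)).powerset,
        if (∑ i ∈ t, (i+1)) = N then (-1:ℤ)^t.card else 0 := by
  unfold eulerPhi
  rw [coeff_mk]
  have expand : (∏ j ∈ range (N+1), (1 - (X : PowerSeries ℤ)^(j+1)))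
      = ∑ t ∈ (range (N+1)).powerset,
          (PowerSeries.C) ((-1:ℤ)^t.card) * X^(∑ i ∈ t, (i+1)) := by
    calc (∏ j ∈ range (N+1), (1 - (X : PowerSeries ℤ)^(j+1)))
        = ∏ j ∈ range (N+1), ((-X^(j+1)) + 1) := by
          refine prod_congr rfl fun j _ => by ring
      _ = ∑ t ∈ (range (N+1)).powerset,
            (∏ i ∈ t, (-X^(i+1))) * ∏ _i ∈ (range (N+1)) \ t, (1 : PowerSeries ℤ) :=
          Finset.prod_add _ _ _
      _ = _ := by
          refine sum_congr rfl fun t _ => ?_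
          rw [Finset.prod_const_one, mul_one]
          have : ∏ i ∈ t, (-(X : PowerSeries ℤ)^(i+1)) = (∏ _i ∈ t, (-1 : PowerSeries ℤ)) * ∏ i ∈ t, X^(i+1) := by
            rw [← Finset.prod_mul_distrib]
            refine prod_congr rfl fun i _ => by ring
          rw [this, Finset.prod_const, Finset.prod_pow_eq_pow_sum]
          congr 1
          rw [map_pow, map_neg, map_one]
  rw [expand, map_sum]
  refine sum_congr rfl fun t _ => ?_
  rw [PowerSeries.coeff_C_mul, PowerSeries.coeff_X_pow, mul_ite, mul_one, mul_zero]
  exact if_congr eq_comm rfl rfl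

lemma reindex (N : ℕ) :
    (∑ t ∈ (range (N+1)).powerset, if (∑ i ∈ t, (i+1)) = N then (-1:ℤ)^t.card else 0)
    = ∑ S ∈ (Icc 1 (N+1)).powerset, if S.sum id = N then (-1:ℤ)^S.card else 0 := by
  refine Finset.sum_bij' (i := fun t _ => t.image (· + 1)) (j := fun S _ => S.image (· - 1))
    ?_ ?_ ?_ ?_ ?_
  · intro t ht
    rw [Finset.mem_powerset] at ht ⊢
    intro x hx
    rw [Finset.mem_image] at hx
    obtain ⟨i, hi, rfl⟩ := hx
    have := ht hi
    rw [Finset.mem_range] at this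
    rw [Finset.mem_Icc]
    omega
  · intro S hS
    rw [Finset.mem_powerset] at hS ⊢
    intro x hx
    rw [Finset.mem_image] at hx
    obtain ⟨i, hi, rfl⟩ := hx
    have := hS hi
    rw [Finset.mem_Icc] at this
    rw [Finset.mem_range]
    omega
  · intro t _
    rw [Finset.image_image]
    have : ((· - 1) ∘ (· + 1) : ℕ → ℕ) = id := by funext x; simp
    rw [this, Finset.image_id]
  · intro S hS
    rw [Finset.mem_powerset] at hS
    rw [Finset.image_image]
    rw [Finset.image_congr (g := id), Finset.image_id]
    intro x hx
    have := hS hx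
    rw [Finset.mem_Icc] at this
    simp only [Function.comp_apply, id_eq]
    omega
  · intro t _
    have hcard : (t.image (· + 1)).card = t.card :=
      Finset.card_image_of_injective _ (add_left_injective 1)
    have hsum : (t.image (· + 1)).sum id = ∑ i ∈ t, (i+1) :=
      Finset.sum_image (fun x _ y _ h => by omega)
    rw [hcard, hsum]

def Excep (S : Finset ℕ) : Prop :=
  ∃ k : ℕ, S = Icc (k+1) (2*k+1) ∨ S = Icc (k+1) (2*k)

lemma runNe (S : Finset ℕ) (h : S.Nonempty) :
    (S.filter fun x => Icc x (S.max' h) ⊆ S).Nonempty := by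
  refine ⟨S.max' h, Finset.mem_filter.mpr ⟨S.max'_mem h, ?_⟩⟩
  intro x hx
  rw [Finset.mem_Icc] at hx
  have : x = S.max' h := le_antisymm hx.2 hx.1
  rw [this]
  exact S.max'_mem h

noncomputable def runMin (S : Finset ℕ) (h : S.Nonempty) : ℕ :=
  (S.filter fun x => Icc x (S.max' h) ⊆ S).min' (runNe S h)

noncomputable def frank (S : Finset ℕ) : Finset ℕ :=
  if h : S.Nonempty then
    if S.min' h + runMin S h ≤ S.max' h + 1 then
      insert (S.max' h + 1) ((S.erase (S.min' h)).erase (S.max' h + 1 - S.min' h))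
    else
      insert (S.max' h + 1 - runMin S h)
        (insert (runMin S h - 1) (S.erase (S.max' h)))
  else ∅

lemma frank_eq_A {S : Finset ℕ} (h : S.Nonempty)
    (hbr : S.min' h + runMin S h ≤ S.max' h + 1) :
    frank S = insert (S.max' h + 1) ((S.erase (S.min' h)).erase (S.max' h + 1 - S.min' h)) := by
  rw [frank, dif_pos h, if_pos hbr]

lemma frank_eq_B {S : Finset ℕ} (h : S.Nonempty)
    (hbr : ¬ (S.min' h + runMin S h ≤ S.max' h + 1)) :
    frank S = insert (S.max' h + 1 - runMin S h)
        (insert (runMin S h - 1) (S.erase (S.max' h))) := by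
  rw [frank, dif_pos h, if_neg hbr]

lemma runMin_mem_props (S : Finset ℕ) (h : S.Nonempty) :
    runMin S h ∈ S ∧ Icc (runMin S h) (S.max' h) ⊆ S := by
  have := Finset.min'_mem (S.filter fun x => Icc x (S.max' h) ⊆ S) (runNe S h)
  rw [Finset.mem_filter] at this
  exact this

lemma runMin_eq {T : Finset ℕ} (hT : T.Nonempty) {m v : ℕ} (hmax : T.max' hT = m)
    (h1 : Icc v m ⊆ T) (h2 : v - 1 ∉ T) (h3 : 1 ≤ v) (h4 : v ≤ m) :
    runMin T hT = v := by
  subst hmax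
  apply le_antisymm
  · apply Finset.min'_le
    rw [Finset.mem_filter]
    exact ⟨h1 (Finset.mem_Icc.mpr ⟨le_refl v, h4⟩), h1⟩
  · apply Finset.le_min'
    intro x hx
    rw [Finset.mem_filter] at hx
    by_contra hc
    push_neg at hc
    exact h2 (hx.2 (Finset.mem_Icc.mpr ⟨by omega, by omega⟩))

lemma runMin_pred_not_mem (S : Finset ℕ) (h : S.Nonempty) (hpos : ∀ x ∈ S, 1 ≤ x) :
    runMin S h - 1 ∉ S := by
  intro hmem
  have h1 : 1 ≤ runMin S h := hpos _ (runMin_mem_props S h).1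
  have h2 : runMin S h - 1 ∈ S.filter fun x => Icc x (S.max' h) ⊆ S := by
    rw [Finset.mem_filter]
    refine ⟨hmem, fun x hx => ?_⟩
    rw [Finset.mem_Icc] at hx
    rcases eq_or_lt_of_le hx.1 with heq | hlt
    · rw [← heq]; exact hmem
    · exact (runMin_mem_props S h).2 (Finset.mem_Icc.mpr ⟨by omega, hx.2⟩)
  have h3 : runMin S h ≤ runMin S h - 1 := Finset.min'_le _ _ h2
  omega

lemma sum_range_id_z (c : ℕ) : (∑ i ∈ range c, (i:ℤ)) * 2 = (c:ℤ) * ((c:ℤ) - 1) := by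
  cases c with
  | zero => simp
  | succ d =>
    have h : (∑ i ∈ range (d+1), i) * 2 = (d+1) * d := by
      simpa using Finset.sum_range_id_mul_two (d+1)
    have h2 : ((∑ i ∈ range (d+1), i : ℕ) : ℤ) * 2 = (((d+1) * d : ℕ) : ℤ) := by
      exact_mod_cast congrArg (Nat.cast : ℕ → ℤ) (by rw [h])
    push_cast at h2 ⊢
    linarith

lemma sumIcc_z (a b : ℕ) (h : a ≤ b + 1) :
    ((∑ i ∈ Icc a b, i : ℕ) : ℤ) * 2 = ((a:ℤ) + b) * ((b:ℤ) + 1 - a) := by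
  rw [← Finset.Ico_add_one_right_eq_Icc, Finset.sum_Ico_eq_sum_range]
  obtain ⟨c, hc⟩ : ∃ c, b + 1 - a = c := ⟨_, rfl⟩
  have hb : (b:ℤ) = (a:ℤ) + c - 1 := by omega
  rw [hc]
  push_cast
  rw [Finset.sum_add_distrib, Finset.sum_const, Finset.card_range, nsmul_eq_mul]
  rw [hb]
  have := sum_range_id_z c
  linarith

lemma caseA_spec {N : ℕ} {S : Finset ℕ} (hsub : S ⊆ Icc 1 (N+1)) (hsum : S.sum id = N)
    (hex : ¬ Excep S) (hne : S.Nonempty)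
    (hbr : S.min' hne + runMin S hne ≤ S.max' hne + 1) :
    frank S ⊆ Icc 1 (N+1) ∧ (frank S).sum id = N ∧ ¬ Excep (frank S) ∧
      frank (frank S) = S ∧ S.card = (frank S).card + 1 := by
  have hpos : ∀ x ∈ S, 1 ≤ x ∧ x ≤ N+1 := fun x hx => by
    have := hsub hx; rw [Finset.mem_Icc] at this; exact this
  set M := S.max' hne with hM
  set sm := S.min' hne with hsm
  set a := runMin S hne with ha
  have hMmem : M ∈ S := S.max'_mem hne
  have hsmmem : sm ∈ S := S.min'_mem hne
  have haS := runMin_mem_props S hne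
  have hsm1 : 1 ≤ sm := (hpos _ hsmmem).1
  have hMN : M ≤ N := by
    have h1 : id M ≤ S.sum id := Finset.single_le_sum (fun i _ => Nat.zero_le _) hMmem
    rw [hsum] at h1
    simpa using h1
  have hsmM : sm ≤ M := S.min'_le _ hMmem
  have hsma : sm ≤ a := S.min'_le _ haS.1
  have haM : a ≤ M := S.le_max' _ haS.1
  have hmemIcc : ∀ x, a ≤ x → x ≤ M → x ∈ S := fun x h1 h2 =>
    haS.2 (Finset.mem_Icc.mpr ⟨h1, h2⟩)
  have hminle : ∀ x ∈ S, sm ≤ x := fun x hx => S.min'_le _ hx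
  have hA1 : 2*sm ≤ M := by
    by_contra hcon
    push_neg at hcon
    have hSIcc : S = Icc sm M := by
      apply Finset.Subset.antisymm
      · intro x hx; rw [Finset.mem_Icc]; exact ⟨hminle x hx, S.le_max' x hx⟩
      · intro x hx; rw [Finset.mem_Icc] at hx; exact hmemIcc x (by omega) hx.2
    exact hex ⟨sm - 1, Or.inl (by rw [hSIcc]; congr 1 <;> omega)⟩
  have hfr := frank_eq_A hne hbr
  rw [← hM, ← hsm] at hfr
  rw [hfr]
  set T := insert (M + 1) ((S.erase sm).erase (M + 1 - sm)) with hT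
  have hM1smS : M + 1 - sm ∈ S := hmemIcc _ (by omega) (by omega)
  have hM1smne : M + 1 - sm ≠ sm := by omega
  have hM1nm : M + 1 ∉ (S.erase sm).erase (M + 1 - sm) := by
    intro hmem
    have h1 := Finset.mem_of_mem_erase (Finset.mem_of_mem_erase hmem)
    have := S.le_max' _ h1
    omega
  have hcard2 : 2 ≤ S.card := Finset.one_lt_card.mpr ⟨sm, hsmmem, M, hMmem, by omega⟩
  have hcardT : S.card = T.card + 1 := by
    rw [hT, Finset.card_insert_of_notMem hM1nm,
        Finset.card_erase_of_mem (Finset.mem_erase.mpr ⟨hM1smne, hM1smS⟩),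
        Finset.card_erase_of_mem hsmmem]
    omega
  have hsumT : T.sum id = N := by
    have e1 : ((S.erase sm).erase (M+1-sm)).sum id + id (M+1-sm) = (S.erase sm).sum id :=
      Finset.sum_erase_add _ _ (Finset.mem_erase.mpr ⟨hM1smne, hM1smS⟩)
    have e2 : (S.erase sm).sum id + id sm = S.sum id := Finset.sum_erase_add _ _ hsmmem
    rw [hT, Finset.sum_insert hM1nm]
    simp only [id_eq] at e1 e2 ⊢
    simp only [id_eq] at hsum
    omega
  have hsubT : T ⊆ Icc 1 (N+1) := by
    intro x hx
    rw [hT, Finset.mem_insert] at hx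
    rcases hx with rfl | hx
    · rw [Finset.mem_Icc]; omega
    · exact hsub (Finset.mem_of_mem_erase (Finset.mem_of_mem_erase hx))
  have hTne : T.Nonempty := ⟨M+1, by rw [hT]; exact Finset.mem_insert_self _ _⟩
  have hmemT : ∀ x, x ∈ T ↔ (x = M+1 ∨ (x ∈ S ∧ x ≠ sm ∧ x ≠ M+1-sm)) := by
    intro x
    rw [hT]
    simp only [Finset.mem_insert, Finset.mem_erase]
    tauto
  have hTmax : T.max' hTne = M+1 := by
    apply le_antisymm
    · apply Finset.max'_le
      intro x hx
      rw [hmemT] at hx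
      rcases hx with rfl | hx
      · omega
      · have := S.le_max' _ hx.1; omega
    · exact Finset.le_max' _ _ ((hmemT _).mpr (Or.inl rfl))
  have hTminge : ∀ x ∈ T, sm + 1 ≤ x := by
    intro x hx
    rw [hmemT] at hx
    rcases hx with rfl | hx
    · omega
    · have := hminle _ hx.1
      have := hx.2.1
      omega
  have hrunT : runMin T hTne = M + 2 - sm := by
    apply runMin_eq hTne hTmax
    · intro x hx
      rw [Finset.mem_Icc] at hx
      rw [hmemT]
      by_cases hxM : x = M+1
      · exact Or.inl hxM
      · refine Or.inr ⟨hmemIcc x (by omega) (by omega), by omega, by omega⟩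
    · intro hmem
      rw [hmemT] at hmem
      rcases hmem with h | h
      · omega
      · exact h.2.2 (by omega)
    · omega
    · omega
  have hbrT : ¬ (T.min' hTne + runMin T hTne ≤ T.max' hTne + 1) := by
    have h1 := hTminge _ (T.min'_mem hTne)
    rw [hrunT, hTmax]
    omega
  have hffr : frank T = S := by
    rw [frank_eq_B hTne hbrT, hrunT, hTmax]
    have e1 : M + 1 + 1 - (M + 2 - sm) = sm := by omega
    have e2 : M + 2 - sm - 1 = M + 1 - sm := by omega
    rw [e1, e2, hT, Finset.erase_insert hM1nm,
        Finset.insert_erase (Finset.mem_erase.mpr ⟨hM1smne, hM1smS⟩),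
        Finset.insert_erase hsmmem]
  have hexT : ¬ Excep T := by
    rintro ⟨k, hk | hk⟩
    · have h2 : 2*k+1 ∈ T := by rw [hk, Finset.mem_Icc]; omega
      have h3 : 2*k+1 ≤ M+1 := le_trans (T.le_max' _ h2) (le_of_eq hTmax)
      have h4 : T.max' hTne ∈ Icc (k+1) (2*k+1) := by rw [← hk]; exact T.max'_mem hTne
      rw [Finset.mem_Icc] at h4
      rw [hTmax] at h4
      have hmx : M + 1 = 2*k+1 := by omega
      have h1 : k+1 ∈ T := by rw [hk, Finset.mem_Icc]; omega
      have h5 := hTminge _ h1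
      have hmm : M+1-sm ∈ T := by rw [hk, Finset.mem_Icc]; omega
      rw [hmemT] at hmm
      rcases hmm with h | h
      · omega
      · exact h.2.2 rfl
    · have hne2 := hTne
      rw [hk] at hne2
      have hk1 := Finset.nonempty_Icc.mp hne2
      have h2 : 2*k ∈ T := by rw [hk, Finset.mem_Icc]; omega
      have h3 : 2*k ≤ M+1 := le_trans (T.le_max' _ h2) (le_of_eq hTmax)
      have h4 : T.max' hTne ∈ Icc (k+1) (2*k) := by rw [← hk]; exact T.max'_mem hTne
      rw [Finset.mem_Icc] at h4
      rw [hTmax] at h4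
      have hmx : M + 1 = 2*k := by omega
      have h1 : k+1 ∈ T := by rw [hk, Finset.mem_Icc]; omega
      have h5 := hTminge _ h1
      have hsmk : sm ≤ k := by omega
      by_cases hsk : sm = k
      · omega
      · have hmm : M+1-sm ∈ T := by rw [hk, Finset.mem_Icc]; omega
        rw [hmemT] at hmm
        rcases hmm with h | h
        · omega
        · exact h.2.2 rfl
  exact ⟨hsubT, hsumT, hexT, hffr, hcardT⟩
lemma caseB_spec {N : ℕ} {S : Finset ℕ} (hsub : S ⊆ Icc 1 (N+1)) (hsum : S.sum id = N)
    (hex : ¬ Excep S) (hne : S.Nonempty)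
    (hbr : ¬ (S.min' hne + runMin S hne ≤ S.max' hne + 1)) :
    frank S ⊆ Icc 1 (N+1) ∧ (frank S).sum id = N ∧ ¬ Excep (frank S) ∧
      frank (frank S) = S ∧ (frank S).card = S.card + 1 := by
  have hpos : ∀ x ∈ S, 1 ≤ x ∧ x ≤ N+1 := fun x hx => by
    have := hsub hx; rw [Finset.mem_Icc] at this; exact this
  have hfr := frank_eq_B hne hbr
  set M := S.max' hne with hM
  set sm := S.min' hne with hsm
  set a := runMin S hne with ha
  push_neg at hbr
  have hMmem : M ∈ S := S.max'_mem hne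
  have hsmmem : sm ∈ S := S.min'_mem hne
  have haS := runMin_mem_props S hne
  have hsm1 : 1 ≤ sm := (hpos _ hsmmem).1
  have hMN : M ≤ N := by
    have h1 : id M ≤ S.sum id := Finset.single_le_sum (fun i _ => Nat.zero_le _) hMmem
    rw [hsum] at h1
    simpa using h1
  have hsmM : sm ≤ M := S.min'_le _ hMmem
  have hsma : sm ≤ a := S.min'_le _ haS.1
  have haM : a ≤ M := S.le_max' _ haS.1
  have ha1 : 1 ≤ a := (hpos _ haS.1).1
  have hmemIcc : ∀ x, a ≤ x → x ≤ M → x ∈ S := fun x h1 h2 =>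
    haS.2 (Finset.mem_Icc.mpr ⟨h1, h2⟩)
  have hminle : ∀ x ∈ S, sm ≤ x := fun x hx => S.min'_le _ hx
  have haP : a - 1 ∉ S := runMin_pred_not_mem S hne (fun y hy => (hpos y hy).1)
  have hB1 : M + 3 ≤ 2*a := by
    by_cases hfull : ∀ x ∈ S, a ≤ x
    · have hsa : sm = a := le_antisymm hsma (hfull _ hsmmem)
      have hSIcc : S = Icc a M := by
        apply Finset.Subset.antisymm
        · intro x hx; rw [Finset.mem_Icc]; exact ⟨hsa ▸ hminle x hx, S.le_max' x hx⟩
        · intro x hx; rw [Finset.mem_Icc] at hx; exact hmemIcc x hx.1 hx.2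
      by_contra hcon
      push_neg at hcon
      exact hex ⟨a - 1, Or.inr (by rw [hSIcc]; congr 1 <;> omega)⟩
    · push_neg at hfull
      obtain ⟨x, hxS, hxa⟩ := hfull
      have hx1 : x ≠ a - 1 := fun h => haP (h ▸ hxS)
      have := hminle x hxS
      omega
  rw [hfr]
  set T := insert (M + 1 - a) (insert (a - 1) (S.erase M)) with hT
  have hnm1 : a - 1 ∉ S.erase M := fun h => haP (Finset.mem_of_mem_erase h)
  have hnm2 : M + 1 - a ∉ insert (a - 1) (S.erase M) := by
    rw [Finset.mem_insert]
    rintro (h | h)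
    · omega
    · have h2 := Finset.mem_of_mem_erase h
      have := hminle _ h2
      omega
  have hmemT : ∀ x, x ∈ T ↔ (x = M + 1 - a ∨ x = a - 1 ∨ (x ∈ S ∧ x ≠ M)) := by
    intro x
    rw [hT]
    simp only [Finset.mem_insert, Finset.mem_erase]
    tauto
  have hcardT : T.card = S.card + 1 := by
    have hc1 : 1 ≤ S.card := Finset.card_pos.mpr hne
    rw [hT, Finset.card_insert_of_notMem hnm2, Finset.card_insert_of_notMem hnm1,
        Finset.card_erase_of_mem hMmem]
    omega
  have hsumT : T.sum id = N := by
    have e1 : (S.erase M).sum id + id M = S.sum id := Finset.sum_erase_add _ _ hMmem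
    rw [hT, Finset.sum_insert hnm2, Finset.sum_insert hnm1]
    simp only [id_eq] at e1 ⊢
    simp only [id_eq] at hsum
    omega
  have hsubT : T ⊆ Icc 1 (N+1) := by
    intro x hx
    rw [hmemT] at hx
    rcases hx with rfl | rfl | hx
    · rw [Finset.mem_Icc]; omega
    · rw [Finset.mem_Icc]; omega
    · exact hsub hx.1
  have hTne : T.Nonempty := ⟨M + 1 - a, by rw [hT]; exact Finset.mem_insert_self _ _⟩
  have hTmax : T.max' hTne = M - 1 := by
    apply le_antisymm
    · apply Finset.max'_le
      intro x hx
      rw [hmemT] at hx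
      rcases hx with rfl | rfl | hx
      · omega
      · omega
      · have := S.le_max' _ hx.1
        have := hx.2
        omega
    · apply Finset.le_max'
      rw [hmemT]
      by_cases hr2 : a = M
      · exact Or.inr (Or.inl (by omega))
      · exact Or.inr (Or.inr ⟨hmemIcc _ (by omega) (by omega), by omega⟩)
  have hTminge : ∀ x ∈ T, M + 1 - a ≤ x := by
    intro x hx
    rw [hmemT] at hx
    rcases hx with rfl | rfl | hx
    · omega
    · omega
    · have := hminle _ hx.1
      omega
  have hTmin : T.min' hTne = M + 1 - a := by
    apply le_antisymm
    · exact Finset.min'_le _ _ ((hmemT _).mpr (Or.inl rfl))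
    · exact Finset.le_min' _ _ _ hTminge
  have hrunT_le : runMin T hTne ≤ a - 1 := by
    apply Finset.min'_le
    rw [Finset.mem_filter]
    constructor
    · exact (hmemT _).mpr (Or.inr (Or.inl rfl))
    · intro x hx
      rw [Finset.mem_Icc, hTmax] at hx
      rw [hmemT]
      by_cases hxa : x = a - 1
      · exact Or.inr (Or.inl hxa)
      · exact Or.inr (Or.inr ⟨hmemIcc _ (by omega) (by omega), by omega⟩)
  have hbrT : T.min' hTne + runMin T hTne ≤ T.max' hTne + 1 := by
    rw [hTmin, hTmax]
    omega
  have hffr : frank T = S := by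
    rw [frank_eq_A hTne hbrT, hTmin, hTmax]
    have e1 : M - 1 + 1 = M := by omega
    have e2 : M - (M + 1 - a) = a - 1 := by omega
    rw [e1, e2, hT, Finset.erase_insert hnm2, Finset.erase_insert hnm1,
        Finset.insert_erase hMmem]
  have hexT : ¬ Excep T := by
    rintro ⟨k, hk | hk⟩
    · have h4 : T.max' hTne ∈ Icc (k+1) (2*k+1) := by rw [← hk]; exact T.max'_mem hTne
      have h5 : T.min' hTne ∈ Icc (k+1) (2*k+1) := by rw [← hk]; exact T.min'_mem hTne
      rw [Finset.mem_Icc] at h4 h5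
      rw [hTmax] at h4
      rw [hTmin] at h5
      have h2 : 2*k+1 ∈ T := by rw [hk, Finset.mem_Icc]; omega
      have h3 : 2*k+1 ≤ M - 1 := le_trans (T.le_max' _ h2) (le_of_eq hTmax)
      have h6 : k+1 ∈ T := by rw [hk, Finset.mem_Icc]; omega
      have h7 := hTminge _ h6
      omega
    · have hne2 := hTne
      rw [hk] at hne2
      have hk1 := Finset.nonempty_Icc.mp hne2
      have h4 : T.max' hTne ∈ Icc (k+1) (2*k) := by rw [← hk]; exact T.max'_mem hTne
      have h5 : T.min' hTne ∈ Icc (k+1) (2*k) := by rw [← hk]; exact T.min'_mem hTne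
      rw [Finset.mem_Icc] at h4 h5
      rw [hTmax] at h4
      rw [hTmin] at h5
      have h2 : 2*k ∈ T := by rw [hk, Finset.mem_Icc]; omega
      have h3 : 2*k ≤ M - 1 := le_trans (T.le_max' _ h2) (le_of_eq hTmax)
      have h6 : k+1 ∈ T := by rw [hk, Finset.mem_Icc]; omega
      have h7 := hTminge _ h6
      omega
  exact ⟨hsubT, hsumT, hexT, hffr, hcardT⟩
noncomputable instance : DecidablePred Excep := fun _ => Classical.dec _

lemma frank_spec {N : ℕ} {S : Finset ℕ} (hsub : S ⊆ Icc 1 (N+1)) (hsum : S.sum id = N)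
    (hex : ¬ Excep S) :
    frank S ⊆ Icc 1 (N+1) ∧ (frank S).sum id = N ∧ ¬ Excep (frank S) ∧
      frank (frank S) = S ∧ (S.card = (frank S).card + 1 ∨ (frank S).card = S.card + 1) := by
  have hne : S.Nonempty := by
    rcases S.eq_empty_or_nonempty with h | h
    · exact absurd ⟨0, Or.inr (by rw [h]; exact (Finset.Icc_eq_empty (by omega)).symm)⟩ hex
    · exact h
  by_cases hbr : S.min' hne + runMin S hne ≤ S.max' hne + 1
  · obtain ⟨h1, h2, h3, h4, h5⟩ := caseA_spec hsub hsum hex hne hbr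
    exact ⟨h1, h2, h3, h4, Or.inl h5⟩
  · obtain ⟨h1, h2, h3, h4, h5⟩ := caseB_spec hsub hsum hex hne hbr
    exact ⟨h1, h2, h3, h4, Or.inr h5⟩

lemma sum_nonexcep_zero (N : ℕ) :
    ∑ S ∈ (((Icc 1 (N+1)).powerset.filter fun S => S.sum id = N).filter
      (fun S => ¬ Excep S)), (-1:ℤ)^S.card = 0 := by
  have hmem : ∀ S, S ∈ (((Icc 1 (N+1)).powerset.filter fun S => S.sum id = N).filter
      (fun S => ¬ Excep S)) ↔ (S ⊆ Icc 1 (N+1) ∧ S.sum id = N ∧ ¬ Excep S) := by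
    intro S
    simp only [Finset.mem_filter, Finset.mem_powerset]
    tauto
  refine Finset.sum_involution (fun S _ => frank S) ?_ ?_ ?_ ?_
  · intro S hS
    obtain ⟨h1, h2, h3⟩ := (hmem S).mp hS
    obtain ⟨_, _, _, _, h5⟩ := frank_spec h1 h2 h3
    rcases h5 with h | h
    · rw [h, pow_succ]; ring
    · rw [h, pow_succ]; ring
  · intro S hS _
    obtain ⟨h1, h2, h3⟩ := (hmem S).mp hS
    obtain ⟨_, _, _, _, h5⟩ := frank_spec h1 h2 h3
    intro heq
    rw [heq] at h5
    omega
  · intro S hS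
    obtain ⟨h1, h2, h3⟩ := (hmem S).mp hS
    obtain ⟨g1, g2, g3, _, _⟩ := frank_spec h1 h2 h3
    exact (hmem _).mpr ⟨g1, g2, g3⟩
  · intro S hS
    obtain ⟨h1, h2, h3⟩ := (hmem S).mp hS
    exact (frank_spec h1 h2 h3).2.2.2.1
lemma sum_excep (N : ℕ) :
    ∑ S ∈ (((Icc 1 (N+1)).powerset.filter fun S => S.sum id = N).filter
      (fun S => Excep S)), (-1:ℤ)^S.card
    = ∑ j ∈ (B N).filter (fun j => E 1 2 j = (N:ℤ)), sg j := by
  have hmem : ∀ S, S ∈ (((Icc 1 (N+1)).powerset.filter fun S => S.sum id = N).filter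
      (fun S => Excep S)) ↔ (S ⊆ Icc 1 (N+1) ∧ S.sum id = N ∧ Excep S) := by
    intro S
    simp only [Finset.mem_filter, Finset.mem_powerset]
    tauto
  refine Finset.sum_bij'
    (i := fun S _ => if S = Icc (S.card + 1) (2*S.card) then (S.card:ℤ) else -(S.card:ℤ))
    (j := fun jj _ => if 0 ≤ jj then Icc (jj.toNat + 1) (2*jj.toNat)
          else Icc ((-jj).toNat) (2*(-jj).toNat - 1)) ?_ ?_ ?_ ?_ ?_
  · -- forward membership
    intro S hS
    obtain ⟨h1, h2, hexc⟩ := (hmem S).mp hS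
    have h2' : (∑ i ∈ S, i) = N := by simpa using h2
    simp only [Finset.mem_filter, B, Finset.mem_Icc]
    obtain ⟨k, hk | hk⟩ := hexc
    · subst hk
      have h2'' := h2'
      have hc : (Icc (k+1) (2*k+1)).card = k+1 := by rw [Nat.card_Icc]; omega
      rw [hc]
      have hne12 : Icc (k+1) (2*k+1) ≠ Icc (k+1+1) (2*(k+1)) := by
        intro h
        have hm : k+1 ∈ Icc (k+1) (2*k+1) := Finset.mem_Icc.mpr (by omega)
        rw [h, Finset.mem_Icc] at hm
        omega
      rw [if_neg hne12]
      have hsz := sumIcc_z (k+1) (2*k+1) (by omega)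
      rw [h2''] at hsz
      push_cast at hsz
      have h3 : 2 * E 1 2 (-((k+1:ℕ):ℤ)) = 2*(N:ℤ) := by
        rw [dE12]
        push_cast
        linear_combination -hsz
      refine ⟨⟨?_, by omega⟩, by linarith⟩
      have : (k:ℤ) ≤ N := by nlinarith
      omega
    · subst hk
      have hc : (Icc (k+1) (2*k)).card = k := by rw [Nat.card_Icc]; omega
      rw [hc]
      rw [if_pos rfl]
      have hsz := sumIcc_z (k+1) (2*k) (by omega)
      rw [h2'] at hsz
      push_cast at hsz
      have h3 : 2 * E 1 2 ((k:ℤ)) = 2*(N:ℤ) := by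
        rw [dE12]
        linear_combination -hsz
      refine ⟨⟨by omega, ?_⟩, by linarith⟩
      have : (k:ℤ) ≤ N + 1 := by nlinarith
      omega
  · -- backward membership
    intro jj hjj
    simp only [Finset.mem_filter, B, Finset.mem_Icc] at hjj
    obtain ⟨⟨hb1, hb2⟩, hE⟩ := hjj
    rw [hmem]
    have h3 : 2 * E 1 2 jj = 2 * (N:ℤ) := by rw [hE]
    rw [dE12] at h3
    by_cases hj0 : 0 ≤ jj
    · rw [if_pos hj0]
      set k : ℕ := jj.toNat with hkd
      have hjk : (k:ℤ) = jj := by omega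
      have hsz := sumIcc_z (k+1) (2*k) (by omega)
      refine ⟨?_, ?_, ⟨k, Or.inr rfl⟩⟩
      · intro x hx
        rw [Finset.mem_Icc] at hx ⊢
        have : 2*(k:ℤ) ≤ (N:ℤ) + 1 := by nlinarith
        omega
      · have hA : ((∑ i ∈ Icc (k+1) (2*k), i : ℕ) : ℤ) * 2 = 2*(N:ℤ) := by
          rw [hsz]
          rw [← hjk] at h3
          push_cast
          linear_combination h3
        have h5 : (∑ i ∈ Icc (k+1) (2*k), i) = N := by omega
        simpa using h5
    · rw [if_neg hj0]
      push_neg at hj0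
      set k : ℕ := (-jj).toNat with hkd
      have hjk : (k:ℤ) = -jj := by omega
      have hk1 : 1 ≤ k := by omega
      have hsz := sumIcc_z k (2*k-1) (by omega)
      refine ⟨?_, ?_, ⟨k - 1, Or.inl (by congr 1 <;> omega)⟩⟩
      · intro x hx
        rw [Finset.mem_Icc] at hx ⊢
        have : 2*(k:ℤ) - 1 ≤ (N:ℤ) + 1 := by nlinarith
        omega
      · have hA : ((∑ i ∈ Icc k (2*k-1), i : ℕ) : ℤ) * 2 = 2*(N:ℤ) := by
          have hcast : ((2*k-1 : ℕ) : ℤ) = 2*(k:ℤ) - 1 := by omega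
          rw [hsz, hcast]
          rw [show jj = -(k:ℤ) by omega] at h3
          linear_combination h3
        have h5 : (∑ i ∈ Icc k (2*k-1), i) = N := by omega
        simpa using h5
  · -- left inverse
    intro S hS
    obtain ⟨h1, h2, hexc⟩ := (hmem S).mp hS
    obtain ⟨k, hk | hk⟩ := hexc
    · subst hk
      have hc : (Icc (k+1) (2*k+1)).card = k+1 := by rw [Nat.card_Icc]; omega
      rw [hc]
      have hne12 : Icc (k+1) (2*k+1) ≠ Icc (k+1+1) (2*(k+1)) := by
        intro h
        have hm : k+1 ∈ Icc (k+1) (2*k+1) := Finset.mem_Icc.mpr (by omega)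
        rw [h, Finset.mem_Icc] at hm
        omega
      rw [if_neg hne12]
      rw [if_neg (show ¬ (0:ℤ) ≤ -((k+1:ℕ):ℤ) by push_cast; omega)]
      congr 1 <;> omega
    · subst hk
      have hc : (Icc (k+1) (2*k)).card = k := by rw [Nat.card_Icc]; omega
      rw [hc, if_pos rfl, if_pos (by omega : (0:ℤ) ≤ (k:ℤ))]
      congr 1 <;> omega
  · -- right inverse
    intro jj hjj
    by_cases hj0 : 0 ≤ jj
    · rw [if_pos hj0]
      set k : ℕ := jj.toNat with hkd
      have hc : (Icc (k+1) (2*k)).card = k := by rw [Nat.card_Icc]; omega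
      rw [hc, if_pos rfl]
      omega
    · rw [if_neg hj0]
      push_neg at hj0
      set k : ℕ := (-jj).toNat with hkd
      have hk1 : 1 ≤ k := by omega
      have hc : (Icc k (2*k-1)).card = k := by rw [Nat.card_Icc]; omega
      rw [hc]
      rw [if_neg ?hne]
      case hne =>
        intro h
        have hm : k ∈ Icc k (2*k-1) := Finset.mem_Icc.mpr (by omega)
        rw [h, Finset.mem_Icc] at hm
        omega
      omega
  · -- summand equality
    intro S hS
    obtain ⟨h1, h2, hexc⟩ := (hmem S).mp hS
    obtain ⟨k, hk | hk⟩ := hexc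
    · subst hk
      have hc : (Icc (k+1) (2*k+1)).card = k+1 := by rw [Nat.card_Icc]; omega
      rw [hc]
      have hne12 : Icc (k+1) (2*k+1) ≠ Icc (k+1+1) (2*(k+1)) := by
        intro h
        have hm : k+1 ∈ Icc (k+1) (2*k+1) := Finset.mem_Icc.mpr (by omega)
        rw [h, Finset.mem_Icc] at hm
        omega
      rw [if_neg hne12, sg_natAbs]
      congr 1 <;> omega
    · subst hk
      have hc : (Icc (k+1) (2*k)).card = k := by rw [Nat.card_Icc]; omega
      rw [hc, if_pos rfl, sg_natAbs]
      congr 1 <;> omega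
lemma pentagonal : eulerPhi = gJacobi 1 2 := by
  classical
  apply PowerSeries.ext
  intro N
  rw [coeff_eulerPhi, reindex, coeff_gJacobi]
  simp only [← Finset.sum_filter]
  rw [← Finset.sum_filter_add_sum_filter_not
    ((Icc 1 (N+1)).powerset.filter fun S => S.sum id = N) Excep]
  rw [sum_nonexcep_zero, add_zero, sum_excep]


end Stmt6Aux

/-- `φ(q)² = g(q⁷,q⁸)g(q⁶,q⁹) − q·g(q⁴,q¹¹)g(q³,q¹²) − q²·g(q,q¹⁴)g(q³,q¹²) − q·g(q⁶,q⁹)g(q²,q¹³) + q²·g(q⁵,q¹⁰)g(1,q¹⁵)`. -/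
theorem stmt6 :
    eulerPhi ^ 2 =
      gJacobi 7 8 * gJacobi 6 9 -
        (PowerSeries.X : PowerSeries ℤ) * gJacobi 4 11 * gJacobi 3 12 -
        (PowerSeries.X : PowerSeries ℤ) ^ 2 * gJacobi 1 14 * gJacobi 3 12 -
        (PowerSeries.X : PowerSeries ℤ) * gJacobi 6 9 * gJacobi 2 13 +
        (PowerSeries.X : PowerSeries ℤ) ^ 2 * gJacobi 5 10 * gJacobi 0 15 := by
  classical
  have hL : eulerPhi ^ 2 = (PowerSeries.X : PowerSeries ℤ)^0 * (gJacobi 1 2 * gJacobi 1 2) := by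
    rw [Stmt6Aux.pentagonal]; ring
  have e1 : gJacobi 7 8 * gJacobi 6 9
      = (PowerSeries.X : PowerSeries ℤ)^0 * (gJacobi 7 8 * gJacobi 6 9) := by ring
  have e2 : (PowerSeries.X : PowerSeries ℤ) * gJacobi 4 11 * gJacobi 3 12
      = (PowerSeries.X : PowerSeries ℤ)^1 * (gJacobi 4 11 * gJacobi 3 12) := by ring
  have e3 : (PowerSeries.X : PowerSeries ℤ)^2 * gJacobi 1 14 * gJacobi 3 12
      = (PowerSeries.X : PowerSeries ℤ)^2 * (gJacobi 1 14 * gJacobi 3 12) := by ring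
  have e4 : (PowerSeries.X : PowerSeries ℤ) * gJacobi 6 9 * gJacobi 2 13
      = (PowerSeries.X : PowerSeries ℤ)^1 * (gJacobi 6 9 * gJacobi 2 13) := by ring
  have e5 : (PowerSeries.X : PowerSeries ℤ)^2 * gJacobi 5 10 * gJacobi 0 15
      = (PowerSeries.X : PowerSeries ℤ)^2 * (gJacobi 5 10 * gJacobi 0 15) := by ring
  rw [hL, e1, e2, e3, e4, e5]
  apply PowerSeries.ext
  intro N
  rw [map_add, map_sub, map_sub, map_sub]
  rw [Stmt6Aux.coeff_X_pow_gg (t:=0) (a:=1) (b:=2) (c:=1) (d:=2) N (by norm_num) (by norm_num),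
      Stmt6Aux.coeff_X_pow_gg (t:=0) (a:=7) (b:=8) (c:=6) (d:=9) N (by norm_num) (by norm_num),
      Stmt6Aux.coeff_X_pow_gg (t:=1) (a:=4) (b:=11) (c:=3) (d:=12) N (by norm_num) (by norm_num),
      Stmt6Aux.coeff_X_pow_gg (t:=2) (a:=1) (b:=14) (c:=3) (d:=12) N (by norm_num) (by norm_num),
      Stmt6Aux.coeff_X_pow_gg (t:=1) (a:=6) (b:=9) (c:=2) (d:=13) N (by norm_num) (by norm_num),
      Stmt6Aux.coeff_X_pow_gg (t:=2) (a:=5) (b:=10) (c:=0) (d:=15) N (by norm_num) (by norm_num)]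
  exact Stmt6Aux.main_identity N
end
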